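/- arXiv:2112.00269 — 10 statements merged into one kernel-verified Lean document; each statement's English description precedes it below -/
import Mathlib

section
/- Let r ∈ (0,1), ρ ∈ (0,1] and α ∈ [0,1] be real numbers, and set β₂ = rρ/(2(1−(1−α)(1−ρ))) and β₃ = (1−r)/(2(1−α(1−ρ))). Then β₂/(β₂+β₃) ≤ r. (Consequently, in the BPA model the limiting ratio of the expected sum of k-hop active gains among minority nodes over that among all nodes never exceeds the minority population ratio r.) -/
/-- For `r ∈ (0,1)`, `ρ ∈ (0,1]`, `α ∈ [0,1]`, with
`β₂ = rρ/(2(1−(1−α)(1−ρ)))` and `β₃ = (1−r)/(2(1−α(1−ρ)))`,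
we have `β₂/(β₂+β₃) ≤ r`. -/
theorem stmt_0 (r ρ α : ℝ) (hr : 0 < r) (hr1 : r < 1)
    (hρ : 0 < ρ) (hρ1 : ρ ≤ 1) (hα : 0 ≤ α) (hα1 : α ≤ 1)
    (β₂ β₃ : ℝ)
    (hβ₂ : β₂ = r * ρ / (2 * (1 - (1 - α) * (1 - ρ))))
    (hβ₃ : β₃ = (1 - r) / (2 * (1 - α * (1 - ρ)))) :
    β₂ / (β₂ + β₃) ≤ r := by
  have hD1 : (0:ℝ) < 1 - (1 - α) * (1 - ρ) := by nlinarith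
  have hD2 : (0:ℝ) < 1 - α * (1 - ρ) := by nlinarith
  have hβ₂pos : 0 < β₂ := by
    rw [hβ₂]; positivity
  have hβ₃pos : 0 < β₃ := by
    rw [hβ₃]
    apply div_pos (by linarith) (by linarith)
  rw [div_le_iff₀ (by linarith)]
  -- suffices: β₂ * (1 - r) ≤ r * β₃
  have key : β₂ * (1 - r) ≤ r * β₃ := by
    rw [hβ₂, hβ₃, div_mul_eq_mul_div, ← mul_div_assoc,
      div_le_div_iff₀ (by linarith) (by linarith)]
    nlinarith [mul_nonneg hα (mul_nonneg (sub_nonneg.2 hρ1) hρ.le),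
      mul_nonneg (mul_nonneg hr.le (sub_nonneg.2 hr1.le))
        (mul_nonneg hα (mul_nonneg (sub_nonneg.2 hρ1) (by linarith : (0:ℝ) ≤ 1 + ρ)))]
  nlinarith
end

section
/- For every r ∈ (0, 1/2) and every ρ ∈ (0, 1], there exists exactly one α ∈ [0,1] satisfying the BPA fixed-point equation 2α = 1 − (1−r)(1−α)/(1−α(1−ρ)) + rα/(1−(1−α)(1−ρ)). -/
private lemma bpa_unique_aux (r ρ b x y : ℝ) (hr : 0 < r) (hr1 : r < 1/2)
    (hρ : 0 < ρ) (hb : b = 1 - ρ) (hb0 : 0 ≤ b)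
    (hx : 0 ≤ x) (hy1 : y ≤ 1) (hxy : x < y)
    (hQx : 2*b^2*x^3 - (3*b^2 - b + 2*r*b)*x^2 - (1 - b^2 - 2*r*b)*x + r*ρ = 0)
    (hQy : 2*b^2*y^3 - (3*b^2 - b + 2*r*b)*y^2 - (1 - b^2 - 2*r*b)*y + r*ρ = 0) :
    False := by
  subst hb
  have hA0 : -(1 - (1-ρ)^2 - 2*r*(1-ρ)) - (x*y*(2*(1-ρ)^2)
      - (x+y)*(2*(1-ρ)^2*(x+y) - (3*(1-ρ)^2 - (1-ρ) + 2*r*(1-ρ)))) = 0 := by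
    have hsub : (-(1 - (1-ρ)^2 - 2*r*(1-ρ)) - (x*y*(2*(1-ρ)^2)
        - (x+y)*(2*(1-ρ)^2*(x+y) - (3*(1-ρ)^2 - (1-ρ) + 2*r*(1-ρ))))) * (x - y) = 0 := by
      linear_combination hQx - hQy
    rcases mul_eq_zero.mp hsub with h | h
    · exact h
    · exact absurd h (by nlinarith)
  have hB0 : r*ρ - x*y*(2*(1-ρ)^2*(x+y) - (3*(1-ρ)^2 - (1-ρ) + 2*r*(1-ρ))) = 0 := by
    linear_combination hQx - x * hA0
  have hxyt : x*y*(2*(1-ρ)^2*(x+y) - (3*(1-ρ)^2 - (1-ρ) + 2*r*(1-ρ))) = r*ρ := by linarith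
  have hxynn : 0 ≤ x*y := mul_nonneg hx (le_trans hx hxy.le)
  have hrρ : 0 < r*ρ := mul_pos hr hρ
  have ht0 : 0 < 2*(1-ρ)^2*(x+y) - (3*(1-ρ)^2 - (1-ρ) + 2*r*(1-ρ)) := by
    by_contra hT
    push_neg at hT
    have h2 : x*y*(2*(1-ρ)^2*(x+y) - (3*(1-ρ)^2 - (1-ρ) + 2*r*(1-ρ))) ≤ 0 :=
      mul_nonpos_of_nonneg_of_nonpos hxynn hT
    linarith
  have hx0 : 0 < x := by
    rcases hx.eq_or_lt with h | h
    · exfalso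
      have h2 : (0:ℝ) = r*ρ := by rw [← hxyt, ← h]; ring
      linarith
    · exact h
  have hy1' : y < 1 := by
    rcases lt_or_eq_of_le hy1 with h | h
    · exact h
    · exfalso
      subst h
      have h2 : r*ρ - ρ = 0 := by linear_combination hQy
      nlinarith
  have hq1 : (1-x)*(1-y)*(2*(1-ρ)^2
      + (2*(1-ρ)^2*(x+y) - (3*(1-ρ)^2 - (1-ρ) + 2*r*(1-ρ)))) = (1-ρ) - 1 + r*ρ := by
    linear_combination -hA0 - hB0
  nlinarith [mul_pos (mul_pos (by linarith : (0:ℝ) < 1-x) (by linarith : (0:ℝ) < 1-y))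
      (by linarith [sq_nonneg (1-ρ)] : (0:ℝ) < 2*(1-ρ)^2
        + (2*(1-ρ)^2*(x+y) - (3*(1-ρ)^2 - (1-ρ) + 2*r*(1-ρ)))), hq1,
    mul_pos hρ (by linarith : (0:ℝ) < 1 - r)]

/-- For every `r ∈ (0, 1/2)` and `ρ ∈ (0, 1]`, there is exactly one `α ∈ [0,1]`
satisfying the BPA fixed-point equation
`2α = 1 − (1−r)(1−α)/(1−α(1−ρ)) + rα/(1−(1−α)(1−ρ))`. -/
theorem stmt_1 (r ρ : ℝ) (hr : 0 < r) (hr1 : r < 1/2) (hρ : 0 < ρ) (hρ1 : ρ ≤ 1) :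
    ∃! α : ℝ, α ∈ Set.Icc (0:ℝ) 1 ∧
      2 * α = 1 - (1 - r) * (1 - α) / (1 - α * (1 - ρ))
        + r * α / (1 - (1 - α) * (1 - ρ)) := by
  have hb0 : 0 ≤ 1 - ρ := by linarith
  set Q : ℝ → ℝ := fun x =>
    2*(1-ρ)^2*x^3 - (3*(1-ρ)^2 - (1-ρ) + 2*r*(1-ρ))*x^2
      - (1 - (1-ρ)^2 - 2*r*(1-ρ))*x + r*ρ with hQ
  have hden : ∀ x ∈ Set.Icc (0:ℝ) 1,
      (1 - x * (1 - ρ)) ≠ 0 ∧ (1 - (1-x) * (1 - ρ)) ≠ 0 := by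
    intro x hx
    obtain ⟨hx0, hx1⟩ := hx
    constructor <;> nlinarith
  have hiff : ∀ x ∈ Set.Icc (0:ℝ) 1,
      (2 * x = 1 - (1 - r) * (1 - x) / (1 - x * (1 - ρ))
        + r * x / (1 - (1 - x) * (1 - ρ))) ↔ Q x = 0 := by
    intro x hx
    obtain ⟨hd, he⟩ := hden x hx
    simp only [hQ]
    constructor
    · intro h
      field_simp at h
      linear_combination -h
    · intro h
      field_simp
      linear_combination -h
  have hQ0 : 0 < Q 0 := by
    simp only [hQ]
    have : 0 < r * ρ := mul_pos hr hρ
    nlinarith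
  have hQ1 : Q 1 < 0 := by
    simp only [hQ]
    nlinarith
  have hcont : ContinuousOn Q (Set.Icc (0:ℝ) 1) := by fun_prop
  have hmem : (0:ℝ) ∈ Set.Icc (Q 1) (Q 0) := ⟨hQ1.le, hQ0.le⟩
  obtain ⟨α, hα, hαQ⟩ := intermediate_value_Icc' (by norm_num : (0:ℝ) ≤ 1) hcont hmem
  refine ⟨α, ⟨hα, (hiff α hα).2 hαQ⟩, ?_⟩
  rintro β ⟨hβ, hβeq⟩
  have hQβ := (hiff β hβ).1 hβeq
  by_contra hne
  simp only [hQ] at hαQ hQβ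
  rcases lt_or_gt_of_ne hne with h | h
  · exact bpa_unique_aux r ρ (1-ρ) β α hr hr1 hρ rfl hb0 hβ.1 hα.2 h hQβ hαQ
  · exact bpa_unique_aux r ρ (1-ρ) α β hr hr1 hρ rfl hb0 hα.1 hβ.2 h hαQ hQβ
end

section
/- For r ∈ (0, 1/2) and ρ ∈ (0, 1], every solution α ∈ [0,1] of the BPA fixed-point equation satisfies 0 < α < 1/2; in particular, there exists a solution in the open interval (0, 1/2). -/
/-- For `r ∈ (0,1/2)` and `ρ ∈ (0,1]`, every solution `α ∈ [0,1]` of the BPA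
fixed-point equation satisfies `0 < α < 1/2`; in particular there exists a
solution in the open interval `(0, 1/2)`. -/
theorem stmt_2 (r ρ : ℝ) (hr : 0 < r) (hr1 : r < 1/2) (hρ : 0 < ρ) (hρ1 : ρ ≤ 1) :
    (∀ α ∈ Set.Icc (0:ℝ) 1,
      2 * α = 1 - (1 - r) * (1 - α) / (1 - α * (1 - ρ))
        + r * α / (1 - (1 - α) * (1 - ρ)) → 0 < α ∧ α < 1/2) ∧
    (∃ α ∈ Set.Ioo (0:ℝ) (1/2),
      2 * α = 1 - (1 - r) * (1 - α) / (1 - α * (1 - ρ))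
        + r * α / (1 - (1 - α) * (1 - ρ))) := by
  set P : ℝ → ℝ := fun α =>
    (2*α - 1) * (1 - α*(1-ρ)) * (1 - (1-α)*(1-ρ))
      + (1-r) * (1-α) * (1 - (1-α)*(1-ρ)) - r * α * (1 - α*(1-ρ)) with hP
  have hD1 : ∀ α : ℝ, 0 ≤ α → α ≤ 1 → 0 < 1 - α*(1-ρ) := by
    intro α h0 h1; nlinarith
  have hD2 : ∀ α : ℝ, 0 ≤ α → α ≤ 1 → 0 < 1 - (1-α)*(1-ρ) := by
    intro α h0 h1; nlinarith
  -- equivalence between equation and P = 0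
  have key : ∀ α : ℝ, 0 ≤ α → α ≤ 1 →
      ((2 * α = 1 - (1 - r) * (1 - α) / (1 - α * (1 - ρ))
        + r * α / (1 - (1 - α) * (1 - ρ))) ↔ P α = 0) := by
    intro α h0 h1
    have d1 := hD1 α h0 h1
    have d2 := hD2 α h0 h1
    rw [hP]
    constructor
    · intro h
      field_simp at h
      simp only
      nlinarith [h]
    · intro h
      simp only at h
      field_simp
      nlinarith [h]
  constructor
  · rintro α ⟨h0, h1⟩ heq
    have hPα : P α = 0 := (key α h0 h1).1 heq
    constructor
    · rcases lt_or_eq_of_le h0 with h | h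
      · exact h
      · exfalso
        rw [hP] at hPα; simp only at hPα
        rw [← h] at hPα
        have d2 := hD2 0 le_rfl zero_le_one
        nlinarith [hPα]
    · by_contra hge
      push_neg at hge
      have hpos : 0 < P α := by
        rw [hP]; simp only
        have hd1 : ρ ≤ 1 - α*(1-ρ) := by nlinarith
        have hd2 : α ≤ 1 - (1-α)*(1-ρ) := by nlinarith
        have hc : (0:ℝ) ≤ 2*α - 1 := by linarith
        have hprod : ρ * α ≤ (1 - α*(1-ρ)) * (1 - (1-α)*(1-ρ)) :=
          mul_le_mul hd1 hd2 h0 (by linarith)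
        have hA : (0:ℝ) ≤ (2*α-1) * ((1 - α*(1-ρ)) * (1 - (1-α)*(1-ρ)) - ρ/2) :=
          mul_nonneg hc (by nlinarith)
        have hB1 : (0:ℝ) ≤ (1-α) * (1 - (1-α)*(1-ρ)) :=
          mul_nonneg (by linarith) (by linarith)
        have hB2 : ρ/2 ≤ α * (1 - α*(1-ρ)) := by nlinarith
        nlinarith [mul_pos (show (0:ℝ) < 1/2 - r by linarith) (show (0:ℝ) < ρ/2 by linarith),
          mul_nonneg (show (0:ℝ) ≤ 1/2 - r by linarith) (show (0:ℝ) ≤ (1-α) * (1 - (1-α)*(1-ρ)) + α * (1 - α*(1-ρ)) - ρ/2 by nlinarith)]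
      linarith [hPα]
  · have hc : ContinuousOn P (Set.Icc 0 (1/2)) := by
      rw [hP]; fun_prop
    have h0 : P 0 < 0 := by
      rw [hP]; simp only; nlinarith
    have h12 : 0 < P (1/2) := by
      rw [hP]; simp only; nlinarith
    have := intermediate_value_Ioo (by norm_num : (0:ℝ) ≤ 1/2) hc
    have hmem : (0:ℝ) ∈ Set.Ioo (P 0) (P (1/2)) := ⟨h0, h12⟩
    obtain ⟨α, hα, hPα⟩ := this hmem
    refine ⟨α, hα, ?_⟩
    exact (key α hα.1.le (by linarith [hα.2] : α ≤ 1)).2 hPα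
end

section
/- For r ∈ (0, 1/2) and ρ ∈ (0, 1], every solution α ∈ [0,1] of the BPA fixed-point equation satisfies α ≤ r, i.e. the limiting fraction of the total degree held by minority nodes is at most the minority population ratio. -/
/-- For `r ∈ (0,1/2)` and `ρ ∈ (0,1]`, every solution `α ∈ [0,1]` of the BPA
fixed-point equation satisfies `α ≤ r`. -/
theorem stmt_3 (r ρ : ℝ) (hr : 0 < r) (hr1 : r < 1/2) (hρ : 0 < ρ) (hρ1 : ρ ≤ 1) :
    ∀ α ∈ Set.Icc (0:ℝ) 1,
      2 * α = 1 - (1 - r) * (1 - α) / (1 - α * (1 - ρ))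
        + r * α / (1 - (1 - α) * (1 - ρ)) → α ≤ r := by
  rintro α ⟨h0, h1⟩ heq
  by_contra hc
  push_neg at hc
  have hD1 : (0:ℝ) < 1 - α * (1 - ρ) := by nlinarith
  have hD2 : (0:ℝ) < 1 - (1 - α) * (1 - ρ) := by nlinarith
  have heq' : 2 * α * ((1 - α * (1 - ρ)) * (1 - (1 - α) * (1 - ρ)))
      = (1 - α * (1 - ρ)) * (1 - (1 - α) * (1 - ρ))
        - (1 - r) * (1 - α) * (1 - (1 - α) * (1 - ρ))
        + r * α * (1 - α * (1 - ρ)) := by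
    field_simp at heq
    linarith [heq]
  -- key identity: (α-r)((1-α)D₂ + αD₁) = (2α-1)·α·(1-α)·(1-ρ)·ρ
  have hid : (α - r) * ((1 - α) * (1 - (1 - α) * (1 - ρ)) + α * (1 - α * (1 - ρ)))
      = (2 * α - 1) * α * (1 - α) * (1 - ρ) * ρ := by
    linear_combination heq'
  have hα0 : 0 < α := lt_trans hr hc
  -- the sum (1-α)D₂ + αD₁ is positive
  have hsum : 0 < (1 - α) * (1 - (1 - α) * (1 - ρ)) + α * (1 - α * (1 - ρ)) := by
    have := mul_pos hα0 hD1
    nlinarith [mul_nonneg (sub_nonneg.mpr h1) hD2.le]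
  -- hence 2α - 1 > 0
  have ht : 0 < 2 * α - 1 := by
    have hpos : 0 < (2 * α - 1) * α * (1 - α) * (1 - ρ) * ρ := by
      rw [← hid]; exact mul_pos (sub_pos.mpr hc) hsum
    by_contra h
    push_neg at h
    nlinarith [mul_nonneg (mul_nonneg (mul_nonneg h0 (sub_nonneg.mpr h1))
      (by linarith : (0:ℝ) ≤ 1 - ρ)) hρ.le]
  -- second identity: α·D₁ - (1-α)·D₂ = ρ(2α-1)
  have hid2 : α * (1 - α * (1 - ρ)) - (1 - α) * (1 - (1 - α) * (1 - ρ))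
      = ρ * (2 * α - 1) := by ring
  -- from heq' : (2α-1)·D₁D₂ = r·((1-α)D₂ + αD₁) - (1-α)D₂ < ((1-α)D₂+αD₁)/2 - (1-α)D₂
  -- so 2(2α-1)D₁D₂ < αD₁ - (1-α)D₂ = ρ(2α-1), i.e. 2D₁D₂ < ρ, contradiction
  have h2 : 2 * ((2 * α - 1) * ((1 - α * (1 - ρ)) * (1 - (1 - α) * (1 - ρ))))
      < ρ * (2 * α - 1) := by
    nlinarith [mul_lt_mul_of_pos_right (show r < 1/2 from hr1) hsum]
  nlinarith [mul_pos ht (mul_pos hD1 hD2),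
    mul_nonneg (mul_nonneg (mul_nonneg h0 (sub_nonneg.mpr h1))
      (by linarith : (0:ℝ) ≤ 1 - ρ)) (by linarith : (0:ℝ) ≤ 1 - ρ),
    mul_pos hρ ht]
end

section
/- Let r ∈ (0, 1/2), ρ ∈ (0, 1), and let α ∈ (0, 1/2) satisfy the BPA fixed-point equation. With β₁ = r/(2(1−(1−α)(1−ρ))), β₂ = rρ/(2(1−(1−α)(1−ρ))), β₃ = (1−r)/(2(1−α(1−ρ))) and β₄ = (1−r)ρ/(2(1−α(1−ρ))), it holds that β₁ + β₄ < β₂ + β₃. -/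
/-- For `r ∈ (0,1/2)`, `ρ ∈ (0,1)`, and a solution `α ∈ (0,1/2)` of the BPA
fixed-point equation, with `β₁ = r/(2(1−(1−α)(1−ρ)))`, `β₂ = rρ/(2(1−(1−α)(1−ρ)))`,
`β₃ = (1−r)/(2(1−α(1−ρ)))`, `β₄ = (1−r)ρ/(2(1−α(1−ρ)))`, we have `β₁ + β₄ < β₂ + β₃`. -/
theorem stmt_4 (r ρ α : ℝ) (hr : 0 < r) (hr1 : r < 1/2) (hρ : 0 < ρ) (hρ1 : ρ < 1)
    (hα : 0 < α) (hα1 : α < 1/2)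
    (hfix : 2 * α = 1 - (1 - r) * (1 - α) / (1 - α * (1 - ρ))
        + r * α / (1 - (1 - α) * (1 - ρ)))
    (β₁ β₂ β₃ β₄ : ℝ)
    (hβ₁ : β₁ = r / (2 * (1 - (1 - α) * (1 - ρ))))
    (hβ₂ : β₂ = r * ρ / (2 * (1 - (1 - α) * (1 - ρ))))
    (hβ₃ : β₃ = (1 - r) / (2 * (1 - α * (1 - ρ))))
    (hβ₄ : β₄ = (1 - r) * ρ / (2 * (1 - α * (1 - ρ)))) :
    β₁ + β₄ < β₂ + β₃ := by
  subst hβ₁ hβ₂ hβ₃ hβ₄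
  have hD₁ : 0 < 1 - (1 - α) * (1 - ρ) := by nlinarith
  have hD₂ : 0 < 1 - α * (1 - ρ) := by nlinarith
  have hkey : (1 - r) * (1 - α) * (1 - (1 - α) * (1 - ρ)) -
      r * α * (1 - α * (1 - ρ)) =
      (1 - 2 * α) * (1 - (1 - α) * (1 - ρ)) * (1 - α * (1 - ρ)) := by
    field_simp at hfix
    linear_combination hfix
  have hF : r * (1 - α * (1 - ρ)) < (1 - r) * (1 - (1 - α) * (1 - ρ)) := by
    by_contra h
    push_neg at h
    have h1 : (1 - α) * ((1 - r) * (1 - (1 - α) * (1 - ρ)) - r * (1 - α * (1 - ρ)))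
        = (1 - 2 * α) * (1 - α * (1 - ρ)) * ((1 - (1 - α) * (1 - ρ)) - r) := by
      linear_combination hkey
    have h2 : α * ((1 - r) * (1 - (1 - α) * (1 - ρ)) - r * (1 - α * (1 - ρ)))
        = (1 - 2 * α) * (1 - (1 - α) * (1 - ρ)) * ((1 - α * (1 - ρ)) - (1 - r)) := by
      linear_combination hkey
    have hd1 : (1 - (1 - α) * (1 - ρ)) ≤ r := by
      by_contra hc
      push_neg at hc
      nlinarith [h1, mul_pos (mul_pos (show (0:ℝ) < 1 - 2*α by linarith) hD₂)
          (show (0:ℝ) < 1 - (1 - α) * (1 - ρ) - r by linarith),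
        mul_nonneg (show (0:ℝ) ≤ 1 - α by linarith)
          (show (0:ℝ) ≤ r * (1 - α * (1 - ρ)) - (1 - r) * (1 - (1 - α) * (1 - ρ)) by linarith)]
    have hd2 : (1 - α * (1 - ρ)) ≤ 1 - r := by
      by_contra hc
      push_neg at hc
      nlinarith [h2, mul_pos (mul_pos (show (0:ℝ) < 1 - 2*α by linarith) hD₁)
          (show (0:ℝ) < 1 - α * (1 - ρ) - (1 - r) by linarith),
        mul_nonneg (le_of_lt hα)
          (show (0:ℝ) ≤ r * (1 - α * (1 - ρ)) - (1 - r) * (1 - (1 - α) * (1 - ρ)) by linarith)]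
    nlinarith
  rw [div_add_div _ _ (by positivity) (by positivity),
    div_add_div _ _ (by positivity) (by positivity),
    div_lt_div_iff₀ (by positivity) (by positivity)]
  nlinarith [mul_pos (mul_pos hD₁ hD₂)
    (mul_pos (show (0:ℝ) < 1 - ρ by linarith)
      (show (0:ℝ) < (1 - r) * (1 - (1 - α) * (1 - ρ)) - r * (1 - α * (1 - ρ)) by linarith))]
end

section
/- Fix r ∈ (0, 1/2) and, for each ρ ∈ (0, 1], let α*(ρ) denote a solution in [0,1] of the BPA fixed-point equation with parameters r and ρ. Then α*(ρ) → r as ρ → 0⁺, and consequently α*(ρ)/(1−α*(ρ)) → r/(1−r) as ρ → 0⁺ (the 1-hop minority-to-majority gain ratio tends to the population ratio). -/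
open Filter Topology

lemma bpa_aux (r ρ α : ℝ) (hr : 0 < r) (hr1 : r < 1/2) (hρ0 : 0 < ρ) (hρ1 : ρ ≤ 1)
    (hα0 : 0 ≤ α) (hα1 : α ≤ 1)
    (heq : 2 * α = 1 - (1 - r) * (1 - α) / (1 - α * (1 - ρ))
        + r * α / (1 - (1 - α) * (1 - ρ)))
    (hρs : Real.sqrt ρ < r / 2) :
    |α - r| ≤ Real.sqrt ρ := by
  set s := Real.sqrt ρ with hsdef
  have hs0 : 0 < s := Real.sqrt_pos.mpr hρ0
  have hss : s * s = ρ := Real.mul_self_sqrt hρ0.le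
  have hD1 : 0 < 1 - α * (1 - ρ) := by nlinarith
  have hD2 : 0 < 1 - (1 - α) * (1 - ρ) := by nlinarith
  set A := α * ρ / (1 - α * (1 - ρ)) with hAdef
  set B := (1 - α) * ρ / (1 - (1 - α) * (1 - ρ)) with hBdef
  have hA0 : 0 ≤ A := div_nonneg (by nlinarith) hD1.le
  have hB0 : 0 ≤ B := div_nonneg (by nlinarith) hD2.le
  have hA1 : A ≤ 1 := by
    rw [hAdef, div_le_one hD1]; nlinarith
  have hB1 : B ≤ 1 := by
    rw [hBdef, div_le_one hD2]; nlinarith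
  have key : 2 * (α - r) = (1 - r) * A - r * B := by
    rw [hAdef, hBdef]
    field_simp at heq ⊢
    ring_nf at heq ⊢
    linarith
  -- α cannot be below s
  have hαs : s ≤ α := by
    by_contra h
    push_neg at h
    linarith [key, mul_le_mul_of_nonneg_left hB1 hr.le, mul_nonneg (by linarith : (0:ℝ) ≤ 1 - r) hA0]
  have h1αs : s ≤ 1 - α := by
    by_contra h
    push_neg at h
    linarith [key, mul_le_mul_of_nonneg_left hA1 (by linarith : (0:ℝ) ≤ 1 - r), mul_nonneg hr.le hB0]
  have hAs : A ≤ s := by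
    rw [hAdef, div_le_iff₀ hD1]; nlinarith
  have hBs : B ≤ s := by
    rw [hBdef, div_le_iff₀ hD2]; nlinarith
  rw [abs_le]
  constructor
  · linarith [key, mul_le_mul_of_nonneg_left hBs hr.le, mul_nonneg (by linarith : (0:ℝ) ≤ 1 - r) hA0,
      mul_lt_mul_of_pos_right hr1 hs0]
  · linarith [key, mul_le_mul_of_nonneg_left hAs (by linarith : (0:ℝ) ≤ 1 - r), mul_nonneg hr.le hB0,
      mul_nonneg hr.le hs0.le]

/-- Fix `r ∈ (0,1/2)` and for each `ρ ∈ (0,1]` let `α* ρ ∈ [0,1]` solve the BPA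
fixed-point equation. Then `α* ρ → r` and `α* ρ / (1 − α* ρ) → r/(1−r)` as `ρ → 0⁺`. -/
theorem stmt_5 (r : ℝ) (hr : 0 < r) (hr1 : r < 1/2) (αs : ℝ → ℝ)
    (hαs : ∀ ρ : ℝ, 0 < ρ → ρ ≤ 1 → αs ρ ∈ Set.Icc (0:ℝ) 1 ∧
      2 * αs ρ = 1 - (1 - r) * (1 - αs ρ) / (1 - αs ρ * (1 - ρ))
        + r * αs ρ / (1 - (1 - αs ρ) * (1 - ρ))) :
    Tendsto αs (𝓝[>] (0:ℝ)) (𝓝 r) ∧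
    Tendsto (fun ρ => αs ρ / (1 - αs ρ)) (𝓝[>] (0:ℝ)) (𝓝 (r / (1 - r))) := by
  have h1 : Tendsto αs (𝓝[>] (0:ℝ)) (𝓝 r) := by
    rw [Metric.tendsto_nhdsWithin_nhds]
    intro ε hε
    refine ⟨min (min (ε^2) 1) ((r/2)^2), by positivity, ?_⟩
    intro ρ hρ hd
    rw [Real.dist_eq, sub_zero] at hd
    have hρ0 : 0 < ρ := hρ
    have hρa : ρ < min (min (ε^2) 1) ((r/2)^2) := by
      rwa [abs_of_pos hρ0] at hd
    have hρ1 : ρ ≤ 1 := le_of_lt (lt_of_lt_of_le hρa (le_trans (min_le_left _ _) (min_le_right _ _)))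
    obtain ⟨⟨hα0, hα1⟩, heq⟩ := hαs ρ hρ0 hρ1
    have hρs : Real.sqrt ρ < r / 2 := by
      rw [show r/2 = Real.sqrt ((r/2)^2) by rw [Real.sqrt_sq (by positivity)]]
      exact Real.sqrt_lt_sqrt hρ0.le (lt_of_lt_of_le hρa (min_le_right _ _))
    have hsε : Real.sqrt ρ < ε := by
      rw [show ε = Real.sqrt (ε^2) by rw [Real.sqrt_sq hε.le]]
      exact Real.sqrt_lt_sqrt hρ0.le
        (lt_of_lt_of_le hρa (le_trans (min_le_left _ _) (min_le_left _ _)))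
    have := bpa_aux r ρ (αs ρ) hr hr1 hρ0 hρ1 hα0 hα1 heq hρs
    rw [Real.dist_eq]
    linarith [abs_le.mp this |>.1, abs_le.mp this |>.2, abs_le.mpr ⟨(abs_le.mp this).1, (abs_le.mp this).2⟩]
  refine ⟨h1, ?_⟩
  have h2 : Tendsto (fun ρ => 1 - αs ρ) (𝓝[>] (0:ℝ)) (𝓝 (1 - r)) :=
    tendsto_const_nhds.sub h1
  exact h1.div h2 (by linarith)
end

section
/- Fix r ∈ (0, 1/2) and, for each ρ ∈ (0, 1], let α*(ρ) denote a solution in [0,1] of the BPA fixed-point equation with parameters r and ρ, and set β₂(ρ) = rρ/(2(1−(1−α*(ρ))(1−ρ))) and β₃(ρ) = (1−r)/(2(1−α*(ρ)(1−ρ))). Then β₂(ρ)/β₃(ρ) → 0 as ρ → 0⁺ (the k-hop minority-to-majority gain ratio vanishes in the fully homophilous limit). -/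
open Filter Topology

/-- Fix `r ∈ (0,1/2)` and for each `ρ ∈ (0,1]` let `α* ρ ∈ [0,1]` solve the BPA
fixed-point equation, and set `β₂(ρ) = rρ/(2(1−(1−α*(ρ))(1−ρ)))` and
`β₃(ρ) = (1−r)/(2(1−α*(ρ)(1−ρ)))`. Then `β₂(ρ)/β₃(ρ) → 0` as `ρ → 0⁺`. -/
theorem stmt_6 (r : ℝ) (hr : 0 < r) (hr1 : r < 1/2) (αs : ℝ → ℝ)
    (hαs : ∀ ρ : ℝ, 0 < ρ → ρ ≤ 1 → αs ρ ∈ Set.Icc (0:ℝ) 1 ∧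
      2 * αs ρ = 1 - (1 - r) * (1 - αs ρ) / (1 - αs ρ * (1 - ρ))
        + r * αs ρ / (1 - (1 - αs ρ) * (1 - ρ))) :
    Tendsto (fun ρ =>
        (r * ρ / (2 * (1 - (1 - αs ρ) * (1 - ρ)))) /
        ((1 - r) / (2 * (1 - αs ρ * (1 - ρ)))))
      (𝓝[>] (0:ℝ)) (𝓝 0) := by
  have hr' : (0:ℝ) < 1 - r := by linarith
  have hmem : Set.Ioo (0:ℝ) (1/2) ∈ 𝓝[>] (0:ℝ) :=
    Ioo_mem_nhdsGT_of_mem (by constructor <;> norm_num)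
  have key : ∀ ρ ∈ Set.Ioo (0:ℝ) (1/2),
      0 ≤ (r * ρ / (2 * (1 - (1 - αs ρ) * (1 - ρ)))) /
        ((1 - r) / (2 * (1 - αs ρ * (1 - ρ)))) ∧
      (r * ρ / (2 * (1 - (1 - αs ρ) * (1 - ρ)))) /
        ((1 - r) / (2 * (1 - αs ρ * (1 - ρ)))) ≤ 4 / (1 - r) * ρ := by
    intro ρ hρ
    obtain ⟨hρ0, hρh⟩ := hρ
    obtain ⟨⟨hα0, hα1⟩, heq⟩ := hαs ρ hρ0 (by linarith)
    set α := αs ρ with hαdef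
    set A := 1 - α * (1 - ρ) with hA
    set B := 1 - (1 - α) * (1 - ρ) with hB
    have hAρ : ρ ≤ A := by nlinarith
    have hBρ : ρ ≤ B := by nlinarith
    have hApos : 0 < A := lt_of_lt_of_le hρ0 hAρ
    have hBpos : 0 < B := lt_of_lt_of_le hρ0 hBρ
    have hA1 : A ≤ 1 := by nlinarith
    -- α ≥ r/2 from the fixed point equation
    have hA2 : 1 - α ≤ A := by nlinarith [mul_nonneg hα0 hρ0.le]
    have h1 : (1 - r) * (1 - α) / A ≤ 1 - r := by
      rw [div_le_iff₀ hApos]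
      exact mul_le_mul_of_nonneg_left hA2 hr'.le
    have h2 : 0 ≤ r * α / B := by positivity
    have hαr : r / 2 ≤ α := by linarith
    have hBr : r / 4 ≤ B := by
      nlinarith [mul_nonneg (sub_nonneg.2 hαr) (by linarith : (0:ℝ) ≤ 1 - ρ),
        mul_le_mul_of_nonneg_left (le_of_lt hρh) hr.le]
    have heqf : (r * ρ / (2 * B)) / ((1 - r) / (2 * A)) = r * ρ * A / ((1 - r) * B) := by
      field_simp
    constructor
    · positivity
    · rw [heqf, div_le_iff₀ (by positivity)]
      have h4 : 4 / (1 - r) * ρ * ((1 - r) * B) = 4 * ρ * B := by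
        field_simp
      rw [h4]
      nlinarith [mul_le_mul_of_nonneg_left hA1 (by positivity : (0:ℝ) ≤ r * ρ),
        mul_le_mul_of_nonneg_left hBr (by positivity : (0:ℝ) ≤ 4 * ρ)]
  have hg : Tendsto (fun ρ : ℝ => 4 / (1 - r) * ρ) (𝓝[>] (0:ℝ)) (𝓝 0) := by
    have : Tendsto (fun ρ : ℝ => 4 / (1 - r) * ρ) (𝓝 (0:ℝ)) (𝓝 (4 / (1 - r) * 0)) :=
      (continuous_const.mul continuous_id).tendsto 0
    simpa using this.mono_left nhdsWithin_le_nhds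
  refine squeeze_zero' ?_ ?_ hg
  · filter_upwards [hmem] with ρ hρ using (key ρ hρ).1
  · filter_upwards [hmem] with ρ hρ using (key ρ hρ).2
end

section
/- Let c₁, c₂ > 0, c₃ ∈ ℝ with c₁ < c₃, m ∈ ℕ, and ε > 0. Let (aₜ)ₜ≥₁, (bₜ)ₜ≥₁, (dₜ)ₜ≥₁ be real sequences with a₁ > 0, bₜ > 0 for all t, satisfying aₜ₊₁ = aₜ + c₁ dₜ aₜ / t + c₂ bₜ for all t ≥ 1, where tᵉ(dₜ − 1) → 0 as t → ∞ and bₜ / ((log t)ᵐ t^{c₃−1}) → 1 as t → ∞. Then aₜ / ((log t)ᵐ t^{c₃}) → c₂/(c₃ − c₁) as t → ∞. -/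
open Filter Topology


private lemma harmonic_tail (T : ℕ) (hT : 1 ≤ T) :
    Tendsto (fun t : ℕ => ∑ s ∈ Finset.Ico T t, (1:ℝ)/s) atTop atTop := by
  have h1 : Tendsto (fun t : ℕ =>
      (∑ i ∈ Finset.range t, (1:ℝ)/(i+1)) + (-(∑ i ∈ Finset.range T, (1:ℝ)/(i+1))))
      atTop atTop :=
    tendsto_atTop_add_const_right atTop _ Real.tendsto_sum_range_one_div_nat_succ_atTop
  refine tendsto_atTop_mono' atTop ?_ h1
  filter_upwards [eventually_ge_atTop T] with t ht
  have := Finset.sum_Ico_eq_sub (fun i : ℕ => (1:ℝ)/(i+1)) ht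
  rw [← sub_eq_add_neg, ← this]
  apply Finset.sum_le_sum
  intro s hs
  have hs1 : 1 ≤ s := le_trans hT (Finset.mem_Ico.mp hs).1
  have hs1' : (1:ℝ) ≤ (s:ℝ) := by exact_mod_cast hs1
  apply one_div_le_one_div_of_le (by linarith)
  linarith

private lemma decay {κ : ℝ} (hκ : 0 < κ) {v : ℕ → ℝ} (hv : ∀ᶠ t : ℕ in atTop, 0 ≤ v t)
    (hrec : ∀ᶠ t : ℕ in atTop, v (t+1) ≤ (1 - κ/t) * v t) :
    Tendsto v atTop (𝓝 0) := by
  obtain ⟨T₀, hT₀⟩ := eventually_atTop.mp (hv.and hrec)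
  set T := max T₀ 1 with hTdef
  have hT1 : 1 ≤ T := le_max_right _ _
  have hprop : ∀ t ≥ T, 0 ≤ v t ∧ v (t+1) ≤ (1 - κ/t) * v t :=
    fun t ht => hT₀ t (le_trans (le_max_left _ _) ht)
  have key : ∀ t, T ≤ t → v t ≤ v T * Real.exp (-(κ * ∑ s ∈ Finset.Ico T t, (1:ℝ)/s)) := by
    intro t ht
    induction t, ht using Nat.le_induction with
    | base => simp
    | succ t ht ih =>
      have h1 := (hprop t ht).2
      have h0 := (hprop t ht).1
      have hexp : (1 - κ/t) ≤ Real.exp (-(κ/t)) := by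
        have := Real.add_one_le_exp (-(κ/t)); linarith
      calc v (t+1) ≤ (1 - κ/t) * v t := h1
        _ ≤ Real.exp (-(κ/t)) * v t := mul_le_mul_of_nonneg_right hexp h0
        _ ≤ Real.exp (-(κ/t)) * (v T * Real.exp (-(κ * ∑ s ∈ Finset.Ico T t, (1:ℝ)/s))) := by
            apply mul_le_mul_of_nonneg_left ih (Real.exp_nonneg _)
        _ = v T * Real.exp (-(κ * ∑ s ∈ Finset.Ico T (t+1), (1:ℝ)/s)) := by
            rw [Finset.sum_Ico_succ_top ht, mul_add, neg_add, Real.exp_add]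
            simp only [one_div]
            ring
  have hS : Tendsto (fun t : ℕ => κ * ∑ s ∈ Finset.Ico T t, (1:ℝ)/s) atTop atTop :=
    (harmonic_tail T hT1).const_mul_atTop hκ
  have hlim : Tendsto (fun t : ℕ => v T * Real.exp (-(κ * ∑ s ∈ Finset.Ico T t, (1:ℝ)/s)))
      atTop (𝓝 0) := by
    have := (Real.tendsto_exp_atBot.comp (tendsto_neg_atTop_atBot.comp hS)).const_mul (v T)
    simpa using this
  refine tendsto_of_tendsto_of_tendsto_of_le_of_le' tendsto_const_nhds hlim ?_ ?_
  · filter_upwards [hv] with t ht using ht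
  · filter_upwards [eventually_ge_atTop T] with t ht using key t ht

private lemma tendsto_zero_of_recur {γ σ : ℕ → ℝ} {g : ℝ} (hg : 0 < g)
    (hγ : Tendsto γ atTop (𝓝 g)) (hσ : Tendsto σ atTop (𝓝 0))
    {u : ℕ → ℝ} (hrec : ∀ᶠ t : ℕ in atTop, u (t+1) = (1 - γ t / t) * u t + σ t / t) :
    Tendsto u atTop (𝓝 0) := by
  rw [NormedAddCommGroup.tendsto_nhds_zero]
  intro ε hε
  set κ := g/2 with hκdef
  set M := ε/2 with hMdef
  have hκ : 0 < κ := by positivity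
  have hM : 0 < M := by positivity
  have h1 : ∀ᶠ t in atTop, κ ≤ γ t := hγ.eventually (eventually_ge_nhds (by simp [hκdef]; linarith))
  have h2 : ∀ᶠ t in atTop, γ t ≤ g + 1 := hγ.eventually (eventually_le_nhds (by linarith))
  have h3 : ∀ᶠ t : ℕ in atTop, g + 1 ≤ (t : ℝ) :=
    tendsto_natCast_atTop_atTop.eventually_ge_atTop (g+1)
  have h4 : ∀ᶠ t : ℕ in atTop, ‖σ t‖ < κ * M :=
    (NormedAddCommGroup.tendsto_nhds_zero.mp hσ (κ*M) (by positivity))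
  set v : ℕ → ℝ := fun t => max (|u t| - M) 0 with hvdef
  have hvrec : ∀ᶠ t : ℕ in atTop, v (t+1) ≤ (1 - κ/t) * v t := by
    filter_upwards [hrec, h1, h2, h3, h4, eventually_ge_atTop 1] with t hu hγ1 hγ2 ht hσt ht1
    have htpos : (0:ℝ) < t := by exact_mod_cast Nat.lt_of_lt_of_le Nat.zero_lt_one ht1
    have hfac : 0 ≤ 1 - γ t / t := by
      rw [sub_nonneg]
      apply div_le_one_of_le₀ (by linarith) htpos.le
    have hfacκ0 : 0 ≤ 1 - κ/t := by
      have : κ / t ≤ γ t / t := by gcongr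
      linarith
    have step1 : |u (t+1)| ≤ (1 - γ t / t) * |u t| + |σ t| / t := by
      rw [hu]
      calc |(1 - γ t / t) * u t + σ t / t| ≤ |(1 - γ t / t) * u t| + |σ t / t| := abs_add_le _ _
        _ = (1 - γ t / t) * |u t| + |σ t| / t := by
            rw [abs_mul, abs_div, abs_of_nonneg hfac, abs_of_pos htpos]
    have step2 : |u (t+1)| - M ≤ (1 - κ/t) * v t := by
      have hγκ : (1 - γ t / t) * |u t| ≤ (1 - κ/t) * |u t| := by
        apply mul_le_mul_of_nonneg_right ?_ (abs_nonneg _)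
        have : κ / t ≤ γ t / t := by gcongr
        linarith
      have hσ' : |σ t| / t ≤ κ * M / t := by
        gcongr
        rw [← Real.norm_eq_abs]; linarith
      have huv : |u t| - M ≤ v t := le_max_left _ _
      have hvnn : 0 ≤ v t := le_max_right _ _
      have e1 : |u (t+1)| - M ≤ (1 - κ/t) * |u t| + κ * M / t - M := by linarith
      have e2 : (1 - κ/t) * |u t| + κ * M / t - M = (1 - κ/t) * (|u t| - M) := by
        field_simp
        ring
      rw [e2] at e1
      calc |u (t+1)| - M ≤ (1 - κ/t) * (|u t| - M) := e1
        _ ≤ (1 - κ/t) * v t := mul_le_mul_of_nonneg_left huv hfacκ0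
    have hpos : 0 ≤ (1 - κ/t) * v t := mul_nonneg hfacκ0 (le_max_right _ _)
    exact max_le step2 hpos
  have hv0 : Tendsto v atTop (𝓝 0) :=
    decay hκ (Eventually.of_forall fun t => le_max_right _ _) hvrec
  filter_upwards [hv0.eventually (eventually_lt_nhds hM)] with t ht
  have : |u t| - M ≤ v t := le_max_left _ _
  rw [Real.norm_eq_abs]
  have : |u t| < 2 * M := by linarith
  simpa [hMdef] using (by linarith : |u t| < ε)

private lemma tendsto_of_recur {γ σ : ℕ → ℝ} {g s : ℝ} (hg : 0 < g)
    (hγ : Tendsto γ atTop (𝓝 g)) (hσ : Tendsto σ atTop (𝓝 s))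
    {u : ℕ → ℝ} (hrec : ∀ᶠ t : ℕ in atTop, u (t+1) = (1 - γ t / t) * u t + σ t / t) :
    Tendsto u atTop (𝓝 (s/g)) := by
  have hσ' : Tendsto (fun t => σ t - γ t * (s/g)) atTop (𝓝 0) := by
    have := hσ.sub (hγ.mul_const (s/g))
    have hval : s - g * (s/g) = 0 := by field_simp; ring
    rwa [hval] at this
  have hrec' : ∀ᶠ t : ℕ in atTop,
      u (t+1) - s/g = (1 - γ t / t) * (u t - s/g)
        + (σ t - γ t * (s/g)) / t := by
    filter_upwards [hrec, eventually_ge_atTop 1] with t hu ht1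
    have htne : (t:ℝ) ≠ 0 := by
      have : (1:ℝ) ≤ t := by exact_mod_cast ht1
      linarith
    rw [hu]
    field_simp
    ring
  have h := tendsto_zero_of_recur (u := fun t => u t - s/g) hg hγ hσ' hrec'
  have := h.add_const (s/g)
  simpa using this

/-- Recursion asymptotics, case `c₁ < c₃`: if `aₜ₊₁ = aₜ + c₁ dₜ aₜ/t + c₂ bₜ`
with `dₜ = 1 + o(t^{−ε})` and `bₜ = (log t)ᵐ t^{c₃−1}(1+o(1))`, then
`aₜ = (c₂/(c₃−c₁)) (log t)ᵐ t^{c₃} (1+o(1))`. -/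
theorem stmt_8 (c₁ c₂ c₃ : ℝ) (hc₁ : 0 < c₁) (hc₂ : 0 < c₂) (hc : c₁ < c₃)
    (m : ℕ) (ε : ℝ) (hε : 0 < ε) (a b d : ℕ → ℝ)
    (ha1 : 0 < a 1) (hb : ∀ t : ℕ, 1 ≤ t → 0 < b t)
    (hrec : ∀ t : ℕ, 1 ≤ t → a (t + 1) = a t + c₁ * d t * a t / t + c₂ * b t)
    (hd : Tendsto (fun t : ℕ => (t : ℝ) ^ ε * (d t - 1)) atTop (𝓝 0))
    (hbas : Tendsto (fun t : ℕ => b t / ((Real.log t) ^ m * (t : ℝ) ^ (c₃ - 1)))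
      atTop (𝓝 1)) :
    Tendsto (fun t : ℕ => a t / ((Real.log t) ^ m * (t : ℝ) ^ c₃))
      atTop (𝓝 (c₂ / (c₃ - c₁))) := by
  -- positivity of the normalizer
  have hG : ∀ x : ℝ, 1 < x → 0 < Real.log x ^ m * x ^ c₃ := fun x hx =>
    mul_pos (pow_pos (Real.log_pos hx) m) (Real.rpow_pos_of_pos (by linarith) c₃)
  -- d → 1
  have hd1 : Tendsto d atTop (𝓝 1) := by
    have h2 : Tendsto (fun t : ℕ => ((t:ℝ) ^ ε * (d t - 1)) * (t:ℝ) ^ (-ε)) atTop (𝓝 0) := by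
      have := hd.mul ((tendsto_rpow_neg_atTop hε).comp tendsto_natCast_atTop_atTop)
      simpa using this
    have h3 : Tendsto (fun t : ℕ => d t - 1) atTop (𝓝 0) := by
      refine h2.congr' ?_
      filter_upwards [eventually_ge_atTop 1] with t ht
      have ht0 : (0:ℝ) < t := by exact_mod_cast ht
      have : (t:ℝ) ^ ε * (t:ℝ) ^ (-ε) = 1 := by
        rw [← Real.rpow_add ht0]; simp
      linear_combination (d t - 1) * this
    have := h3.add_const 1
    simpa using this
  -- φ := t/(t+1) → 1
  have hφ : Tendsto (fun t : ℕ => (t:ℝ)/((t:ℝ)+1)) atTop (𝓝 1) := by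
    have h := (tendsto_const_nhds : Tendsto (fun _ : ℕ => (1:ℝ)) atTop (𝓝 1)).sub tendsto_one_div_add_atTop_nhds_zero_nat
    rw [sub_zero] at h
    refine h.congr fun t => ?_
    have h0 : ((t:ℝ)+1) ≠ 0 := by positivity
    field_simp
    ring
  have hφlt : ∀ t : ℕ, (t:ℝ)/((t:ℝ)+1) < 1 := fun t => by
    rw [div_lt_one (by positivity)]; linarith
  -- (log (t+1))⁻¹ → 0
  have hloginv : Tendsto (fun t : ℕ => (Real.log ((t:ℝ)+1))⁻¹) atTop (𝓝 0) := by
    have h1 : Tendsto (fun t : ℕ => (t:ℝ)+1) atTop atTop :=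
      tendsto_atTop_add_const_right atTop 1 tendsto_natCast_atTop_atTop
    exact (Real.tendsto_log_atTop.comp h1).inv_tendsto_atTop
  -- log(1+1/t) → 0
  have hlog1 : Tendsto (fun t : ℕ => Real.log (1 + 1/(t:ℝ))) atTop (𝓝 0) := by
    have h1 : Tendsto (fun t : ℕ => 1 + 1/(t:ℝ)) atTop (𝓝 1) := by
      have := (tendsto_const_nhds : Tendsto (fun _ : ℕ => (1:ℝ)) atTop (𝓝 1)).add tendsto_one_div_atTop_nhds_zero_nat
      simpa using this
    have := (Real.continuousAt_log one_ne_zero).tendsto.comp h1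
    simpa [Function.comp_def] using this
  -- t·log(1+1/t) → 1
  have htlog : Tendsto (fun t : ℕ => (t:ℝ) * Real.log (1 + 1/(t:ℝ))) atTop (𝓝 1) := by
    have := (Real.tendsto_mul_log_one_add_div_atTop 1).comp tendsto_natCast_atTop_atTop
    simpa [Function.comp_def] using this
  -- key log facts for t ≥ 1
  have hlogkey : ∀ t : ℕ, 1 ≤ t → Real.log (1 + 1/(t:ℝ)) = Real.log ((t:ℝ)+1) - Real.log t := by
    intro t ht
    have ht0 : (0:ℝ) < t := by exact_mod_cast ht
    have h1 : (1:ℝ) + 1/t = ((t:ℝ)+1)/t := by field_simp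
    rw [h1, Real.log_div (by positivity) (by positivity)]
  have hlogpos : ∀ t : ℕ, 2 ≤ t → 0 < Real.log t := fun t ht =>
    Real.log_pos (by exact_mod_cast ht : (1:ℝ) < t) |>.trans_le le_rfl
  have hlogpos' : ∀ t : ℕ, 1 ≤ t → 0 < Real.log ((t:ℝ)+1) := by
    intro t ht
    have h1 : (1:ℝ) ≤ t := by exact_mod_cast ht
    exact Real.log_pos (by linarith)
  -- ψ := log t / log (t+1) → 1
  have hψ : Tendsto (fun t : ℕ => Real.log t / Real.log ((t:ℝ)+1)) atTop (𝓝 1) := by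
    have h := (tendsto_const_nhds : Tendsto (fun _ : ℕ => (1:ℝ)) atTop (𝓝 1)).sub (hlog1.mul hloginv)
    rw [mul_zero, sub_zero] at h
    refine h.congr' ?_
    filter_upwards [eventually_ge_atTop 1] with t ht
    have hL := hlogpos' t ht
    rw [hlogkey t ht]
    field_simp
    ring
  have hψlt : ∀ᶠ t : ℕ in atTop, Real.log t / Real.log ((t:ℝ)+1) < 1 := by
    filter_upwards [eventually_ge_atTop 2] with t ht
    have ht0 : (0:ℝ) < t := by
      have : (2:ℝ) ≤ t := by exact_mod_cast ht
      linarith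
    rw [div_lt_one (hlogpos' t (by omega))]
    exact Real.log_lt_log ht0 (by linarith)
  -- t(1 - ψ) → 0
  have htψ : Tendsto (fun t : ℕ => (t:ℝ) * (1 - Real.log t / Real.log ((t:ℝ)+1)))
      atTop (𝓝 0) := by
    have h := htlog.mul hloginv
    rw [mul_zero] at h
    refine h.congr' ?_
    filter_upwards [eventually_ge_atTop 1] with t ht
    have hL := hlogpos' t ht
    rw [hlogkey t ht]
    field_simp
  -- slope lemma for pow m at 1
  have hslopeA : Tendsto (fun t : ℕ =>
      ((Real.log t / Real.log ((t:ℝ)+1))^m - 1) / (Real.log t / Real.log ((t:ℝ)+1) - 1))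
      atTop (𝓝 (m:ℝ)) := by
    have hder := hasDerivAt_pow m (1:ℝ)
    rw [hasDerivAt_iff_tendsto_slope] at hder
    have hψ' : Tendsto (fun t : ℕ => Real.log t / Real.log ((t:ℝ)+1)) atTop (𝓝[≠] 1) := by
      rw [tendsto_nhdsWithin_iff]
      exact ⟨hψ, hψlt.mono fun t h => by simp [ne_of_lt h]⟩
    have h2 : Tendsto (slope (fun x : ℝ => x ^ m) 1 ∘
        fun t : ℕ => Real.log t / Real.log ((t:ℝ)+1)) atTop (𝓝 (m:ℝ)) := by
      simpa using hder.comp hψ'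
    refine h2.congr fun t => ?_
    simp [Function.comp, slope_def_field]
  -- t(1 - ψ^m) → 0
  have htA : Tendsto (fun t : ℕ =>
      (t:ℝ) * (1 - (Real.log t / Real.log ((t:ℝ)+1))^m)) atTop (𝓝 0) := by
    have h := hslopeA.mul htψ
    rw [mul_zero] at h
    refine h.congr' ?_
    filter_upwards [hψlt] with t hlt
    have hne : Real.log t / Real.log ((t:ℝ)+1) - 1 ≠ 0 := by
      intro h; apply absurd hlt; simp [show Real.log t / Real.log ((t:ℝ)+1) = 1 by linarith]
    rw [div_mul_eq_mul_div, div_eq_iff hne]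
    ring
  -- ψ^m → 1
  have hA1 : Tendsto (fun t : ℕ => (Real.log t / Real.log ((t:ℝ)+1))^m) atTop (𝓝 1) := by
    have := hψ.pow m
    simpa using this
  -- slope lemma for rpow c₃ at 1
  have hslopeB : Tendsto (fun t : ℕ =>
      (((t:ℝ)/((t:ℝ)+1))^c₃ - 1) / ((t:ℝ)/((t:ℝ)+1) - 1)) atTop (𝓝 c₃) := by
    have hder := Real.hasDerivAt_rpow_const (x := (1:ℝ)) (p := c₃) (Or.inl one_ne_zero)
    rw [hasDerivAt_iff_tendsto_slope] at hder
    have hφ' : Tendsto (fun t : ℕ => (t:ℝ)/((t:ℝ)+1)) atTop (𝓝[≠] 1) := by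
      rw [tendsto_nhdsWithin_iff]
      exact ⟨hφ, Eventually.of_forall fun t => by simp [ne_of_lt (hφlt t)]⟩
    have h2 : Tendsto (slope (fun x : ℝ => x ^ c₃) 1 ∘
        fun t : ℕ => (t:ℝ)/((t:ℝ)+1)) atTop (𝓝 c₃) := by
      simpa using hder.comp hφ'
    refine h2.congr fun t => ?_
    simp [Function.comp, slope_def_field, Real.one_rpow]
  -- t(1 - φ^c₃) → c₃
  have htB : Tendsto (fun t : ℕ => (t:ℝ) * (1 - ((t:ℝ)/((t:ℝ)+1))^c₃)) atTop (𝓝 c₃) := by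
    have h := hslopeB.mul hφ
    rw [mul_one] at h
    refine h.congr' ?_
    filter_upwards [eventually_ge_atTop 1] with t ht
    have h0 : ((t:ℝ)+1) ≠ 0 := by positivity
    have hne : (t:ℝ)/((t:ℝ)+1) - 1 ≠ 0 := by
      intro h; apply absurd (hφlt t); simp [show (t:ℝ)/((t:ℝ)+1) = 1 by linarith]
    set x := ((t:ℝ)/((t:ℝ)+1))^c₃ with hx
    rw [div_mul_eq_mul_div, div_eq_iff hne]
    field_simp
    ring
  -- φ^c₃ → 1
  have hB1 : Tendsto (fun t : ℕ => ((t:ℝ)/((t:ℝ)+1))^c₃) atTop (𝓝 1) := by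
    have := (Real.continuousAt_rpow_const 1 c₃ (Or.inl one_ne_zero)).tendsto.comp hφ
    simpa [Function.comp_def] using this
  -- ratio identity
  have hrAB : ∀ t : ℕ, 2 ≤ t →
      (Real.log t ^ m * (t:ℝ) ^ c₃) / (Real.log ((t:ℝ)+1) ^ m * ((t:ℝ)+1) ^ c₃)
        = (Real.log t / Real.log ((t:ℝ)+1))^m * ((t:ℝ)/((t:ℝ)+1))^c₃ := by
    intro t ht
    have ht0 : (0:ℝ) ≤ t := by positivity
    rw [div_pow, Real.div_rpow ht0 (by positivity : (0:ℝ) ≤ (t:ℝ)+1), div_mul_div_comm]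
  set γf : ℕ → ℝ := fun t => (t:ℝ) * (1 -
    ((Real.log t ^ m * (t:ℝ) ^ c₃) / (Real.log ((t:ℝ)+1) ^ m * ((t:ℝ)+1) ^ c₃))
      * (1 + c₁ * d t / t)) with hγf
  set σf : ℕ → ℝ := fun t => (t:ℝ) *
    (c₂ * b t / (Real.log ((t:ℝ)+1) ^ m * ((t:ℝ)+1) ^ c₃)) with hσf
  have hγlim : Tendsto γf atTop (𝓝 (c₃ - c₁)) := by
    have hcore := (htB.add (hB1.mul htA)).sub ((hd1.const_mul c₁).mul (hA1.mul hB1))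
    have hval : (c₃ + 1*0) - (c₁*1)*(1*1) = c₃ - c₁ := by ring
    rw [hval] at hcore
    refine hcore.congr' ?_
    filter_upwards [eventually_ge_atTop 2] with t ht
    have ht0 : (t:ℝ) ≠ 0 := by positivity
    simp only [hγf]
    rw [hrAB t ht]
    set A := (Real.log t / Real.log ((t:ℝ)+1))^m with hA
    set B := ((t:ℝ)/((t:ℝ)+1))^c₃ with hB
    field_simp
    ring
  have hσlim : Tendsto σf atTop (𝓝 c₂) := by
    have hcore := (hbas.const_mul c₂).mul (hA1.mul hB1)
    have hval : (c₂*1)*(1*1) = c₂ := by ring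
    rw [hval] at hcore
    refine hcore.congr' ?_
    filter_upwards [eventually_ge_atTop 2] with t ht
    have ht1 : (1:ℝ) < t := by exact_mod_cast lt_of_lt_of_le one_lt_two ht
    have ht0 : (t:ℝ) ≠ 0 := by positivity
    have hL : 0 < Real.log t := hlogpos t ht
    have hL1 : 0 < Real.log ((t:ℝ)+1) := hlogpos' t (by omega)
    have hsplit : (t:ℝ)^c₃ = (t:ℝ)^(c₃-1) * t := by
      rw [← Real.rpow_add_one ht0 (c₃-1)]; norm_num
    simp only [hσf]
    rw [← hrAB t ht, hsplit]
    have h1 : Real.log ((t:ℝ)+1)^m ≠ 0 := by positivity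
    have h1' : ((t:ℝ)+1)^c₃ ≠ 0 := (Real.rpow_pos_of_pos (by linarith) c₃).ne'
    have h2 : Real.log (t:ℝ)^m ≠ 0 := by positivity
    have h3 : (t:ℝ)^(c₃-1) ≠ 0 := (Real.rpow_pos_of_pos (by linarith) (c₃-1)).ne'
    field_simp
  have hrec' : ∀ᶠ t : ℕ in atTop,
      (fun t : ℕ => a t / (Real.log t ^ m * (t:ℝ) ^ c₃)) (t+1)
        = (1 - γf t / t) * (fun t : ℕ => a t / (Real.log t ^ m * (t:ℝ) ^ c₃)) t
          + σf t / t := by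
    filter_upwards [eventually_ge_atTop 2] with t ht
    have ht1 : (1:ℝ) < t := by exact_mod_cast lt_of_lt_of_le one_lt_two ht
    have ht0 : (t:ℝ) ≠ 0 := by positivity
    have hL : 0 < Real.log t := hlogpos t ht
    have hL1 : 0 < Real.log ((t:ℝ)+1) := hlogpos' t (by omega)
    have hl1 : Real.log t ^ m ≠ 0 := by positivity
    have hl2 : (t:ℝ)^c₃ ≠ 0 := (Real.rpow_pos_of_pos (by linarith) c₃).ne'
    have hl3 : Real.log ((t:ℝ)+1) ^ m ≠ 0 := by positivity
    have hl4 : ((t:ℝ)+1)^c₃ ≠ 0 := (Real.rpow_pos_of_pos (by linarith) c₃).ne'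
    simp only [hγf, hσf]
    push_cast
    rw [hrec t (by omega)]
    field_simp
    ring
  exact tendsto_of_recur (g := c₃ - c₁) (s := c₂) (by linarith) hγlim hσlim hrec'
end

section
/- Let c₁ = c₃ = c with c₁, c₂ > 0, m ∈ ℕ, and ε > 0. Let (aₜ)ₜ≥₁, (bₜ)ₜ≥₁, (dₜ)ₜ≥₁ be real sequences with a₁ > 0, bₜ > 0 for all t, satisfying aₜ₊₁ = aₜ + c₁ dₜ aₜ / t + c₂ bₜ for all t ≥ 1, where tᵉ(dₜ − 1) → 0 as t → ∞ and bₜ / ((log t)ᵐ t^{c−1}) → 1 as t → ∞. Then there exists a constant C > 0 such that aₜ / ((log t)^{m+1} t^{c}) → C as t → ∞. -/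
open Filter Topology Finset

lemma log_one_add_sub_le {y : ℝ} (hy : |y| ≤ 1/2) :
    |Real.log (1 + y) - y| ≤ 2 * y ^ 2 := by
  have h : |(-y)| < 1 := by rw [abs_neg]; linarith
  have h2 := Real.abs_log_sub_add_sum_range_le h 1
  simp only [Finset.sum_range_one, pow_one, Nat.cast_zero, zero_add, div_one, abs_neg,
    sub_neg_eq_add] at h2
  have h3 : |Real.log (1 + y) - y| = |(-y) + Real.log (1 + y)| := by
    rw [sub_eq_neg_add]
  rw [h3]
  calc |(-y) + Real.log (1 + y)| ≤ |y| ^ 2 / (1 - |y|) := h2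
    _ ≤ |y| ^ 2 / (1/2) := by
        apply div_le_div_of_nonneg_left (by positivity) (by norm_num) (by linarith)
    _ = 2 * y ^ 2 := by rw [sq_abs]; ring

lemma cesaro_weighted (N0 : ℕ) (f g : ℕ → ℝ) (μ : ℝ)
    (hg : ∀ s, N0 ≤ s → 0 < g s)
    (hG : Tendsto (fun t => ∑ s ∈ Finset.Ico N0 t, g s) atTop atTop)
    (hfg : Tendsto (fun s => f s / g s) atTop (𝓝 μ)) :
    Tendsto (fun t => (∑ s ∈ Finset.Ico N0 t, f s) / (∑ s ∈ Finset.Ico N0 t, g s))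
      atTop (𝓝 μ) := by
  rw [Metric.tendsto_atTop]
  intro ε hε
  have hε4 : 0 < ε / 4 := by linarith
  obtain ⟨N1, hN1⟩ := (Metric.tendsto_atTop.mp hfg) (ε / 4) hε4
  set N := max N1 N0 with hN
  have key : ∀ s, N ≤ s → |f s - μ * g s| ≤ (ε / 4) * g s := by
    intro s hs
    have hgs := hg s (le_trans (le_max_right _ _) hs)
    have h1 := hN1 s (le_trans (le_max_left _ _) hs)
    rw [Real.dist_eq] at h1
    have : f s - μ * g s = (f s / g s - μ) * g s := by field_simp
    rw [this, abs_mul, abs_of_pos hgs]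
    exact mul_le_mul_of_nonneg_right h1.le hgs.le
  set C := |∑ s ∈ Finset.Ico N0 N, (f s - μ * g s)| with hC
  obtain ⟨N2, hN2⟩ := eventually_atTop.mp (hG.eventually_ge_atTop (max 1 ((C + 1) / (ε / 4))))
  refine ⟨max N2 N, fun t ht => ?_⟩
  have htN2 : N2 ≤ t := le_trans (le_max_left _ _) ht
  have htN : N ≤ t := le_trans (le_max_right _ _) ht
  have hGt := hN2 t htN2
  have hGpos : (0:ℝ) < ∑ s ∈ Finset.Ico N0 t, g s :=
    lt_of_lt_of_le one_pos (le_trans (le_max_left _ _) hGt)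
  set G := ∑ s ∈ Finset.Ico N0 t, g s with hGdef
  have hsplit : ∑ s ∈ Finset.Ico N0 t, (f s - μ * g s)
      = (∑ s ∈ Finset.Ico N0 N, (f s - μ * g s)) + ∑ s ∈ Finset.Ico N t, (f s - μ * g s) := by
    rw [Finset.sum_Ico_consecutive _ (le_max_right _ _) htN]
  have htail : |∑ s ∈ Finset.Ico N t, (f s - μ * g s)| ≤ (ε / 4) * G := by
    calc |∑ s ∈ Finset.Ico N t, (f s - μ * g s)|
        ≤ ∑ s ∈ Finset.Ico N t, |f s - μ * g s| := Finset.abs_sum_le_sum_abs _ _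
      _ ≤ ∑ s ∈ Finset.Ico N t, (ε / 4) * g s := by
          apply Finset.sum_le_sum
          intro s hs
          exact key s (Finset.mem_Ico.mp hs).1
      _ = (ε / 4) * ∑ s ∈ Finset.Ico N t, g s := by rw [Finset.mul_sum]
      _ ≤ (ε / 4) * G := by
          apply mul_le_mul_of_nonneg_left _ hε4.le
          apply Finset.sum_le_sum_of_subset_of_nonneg
          · exact Finset.Ico_subset_Ico (le_max_right _ _) le_rfl
          · intro i hi _; exact (hg i (Finset.mem_Ico.mp hi).1).le
  have hnum : |∑ s ∈ Finset.Ico N0 t, f s - μ * G| ≤ C + (ε / 4) * G := by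
    have : ∑ s ∈ Finset.Ico N0 t, f s - μ * G = ∑ s ∈ Finset.Ico N0 t, (f s - μ * g s) := by
      rw [Finset.sum_sub_distrib, ← Finset.mul_sum]
    rw [this, hsplit]
    exact le_trans (abs_add_le _ _) (add_le_add le_rfl htail)
  rw [Real.dist_eq]
  have heq : (∑ s ∈ Finset.Ico N0 t, f s) / G - μ
      = (∑ s ∈ Finset.Ico N0 t, f s - μ * G) / G := by field_simp
  rw [heq, abs_div, abs_of_pos hGpos]
  have hεG : C + 1 ≤ (ε / 4) * G := by
    have h6 : (C + 1) / (ε / 4) ≤ G := le_trans (le_max_right _ _) hGt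
    calc C + 1 = (ε / 4) * ((C + 1) / (ε / 4)) := by field_simp
      _ ≤ (ε / 4) * G := mul_le_mul_of_nonneg_left h6 hε4.le
  calc |∑ s ∈ Finset.Ico N0 t, f s - μ * G| / G ≤ (C + (ε / 4) * G) / G := by gcongr
    _ < ε := by
        rw [div_lt_iff₀ hGpos]
        nlinarith [abs_nonneg (∑ s ∈ Finset.Ico N0 N, (f s - μ * g s))]

lemma aux_mul_log : Tendsto (fun s : ℕ => (s:ℝ) * Real.log (1 + 1/s)) atTop (𝓝 1) :=
  (Real.tendsto_mul_log_one_add_div_atTop 1).comp tendsto_natCast_atTop_atTop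

lemma aux_log_succ_sub : Tendsto (fun s : ℕ => Real.log (↑s+1) - Real.log ↑s) atTop (𝓝 0) := by
  have h : Tendsto (fun s : ℕ => ((s:ℝ) * Real.log (1 + 1/s)) * (1/s)) atTop (𝓝 (1 * 0)) :=
    aux_mul_log.mul tendsto_one_div_atTop_nhds_zero_nat
  rw [mul_zero] at h
  apply h.congr'
  filter_upwards [eventually_ge_atTop 1] with s hs
  have hs0 : (0:ℝ) < s := by exact_mod_cast hs
  have h1 : (1:ℝ) + 1/s = (↑s+1)/s := by field_simp
  rw [h1, Real.log_div (by positivity) (ne_of_gt hs0)]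
  field_simp

lemma aux_log_ratio : Tendsto (fun s : ℕ => Real.log (↑s+1) / Real.log ↑s) atTop (𝓝 1) := by
  have hlog : Tendsto (fun s : ℕ => Real.log ↑s) atTop atTop :=
    Real.tendsto_log_atTop.comp tendsto_natCast_atTop_atTop
  have h : Tendsto (fun s : ℕ => (Real.log (↑s+1) - Real.log ↑s) * (Real.log ↑s)⁻¹ + 1)
      atTop (𝓝 (0 * 0 + 1)) :=
    (aux_log_succ_sub.mul hlog.inv_tendsto_atTop).add tendsto_const_nhds
  rw [zero_mul, zero_add] at h
  apply h.congr'
  filter_upwards [eventually_ge_atTop 2] with s hs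
  have hu : (0:ℝ) < Real.log ↑s := Real.log_pos (by exact_mod_cast hs)
  field_simp
  ring

lemma aux_gm (m : ℕ) : Tendsto (fun s : ℕ =>
    (s:ℝ) * (Real.log (↑s+1) ^ (m+1) - Real.log ↑s ^ (m+1)) / Real.log ↑s ^ m)
    atTop (𝓝 (m+1)) := by
  have hsum : Tendsto (fun s : ℕ => ∑ i ∈ range (m+1), (Real.log (↑s+1) / Real.log ↑s) ^ i)
      atTop (𝓝 (m+1)) := by
    have := tendsto_finset_sum (range (m+1)) (fun i (_ : i ∈ range (m+1)) => aux_log_ratio.pow i)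
    simpa using this
  have hmain : Tendsto (fun s : ℕ => ((s:ℝ) * Real.log (1 + 1/s)) *
      ∑ i ∈ range (m+1), (Real.log (↑s+1) / Real.log ↑s) ^ i) atTop (𝓝 (1 * (m+1))) :=
    aux_mul_log.mul hsum
  rw [one_mul] at hmain
  apply hmain.congr'
  filter_upwards [eventually_ge_atTop 2] with s hs
  have hs0 : (0:ℝ) < s := by exact_mod_cast Nat.lt_of_lt_of_le Nat.zero_lt_two hs
  set u := Real.log ↑s with hu_def
  set v := Real.log (↑s+1) with hv_def
  have hu : (0:ℝ) < u := Real.log_pos (by exact_mod_cast hs)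
  have hlog1 : Real.log (1 + 1/(s:ℝ)) = v - u := by
    have h1 : (1:ℝ) + 1/s = (↑s+1)/s := by field_simp
    rw [h1, Real.log_div (by positivity) (ne_of_gt hs0)]
  have hgeom := geom_sum₂_mul v u (m+1)
  simp only [Nat.add_sub_cancel] at hgeom
  have hdiv : ∑ i ∈ range (m+1), (v/u)^i
      = (∑ i ∈ range (m+1), v^i * u^(m-i)) / u^m := by
    rw [Finset.sum_div]
    apply Finset.sum_congr rfl
    intro i hi
    have him : i ≤ m := Nat.lt_succ_iff.mp (Finset.mem_range.mp hi)
    have hum : u^m = u^(m-i) * u^i := by rw [← pow_add]; congr 1; omega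
    rw [div_pow, hum, mul_comm (v^i), mul_div_mul_left _ _ (pow_ne_zero _ hu.ne')]
  rw [hlog1, hdiv, ← hgeom]
  field_simp

lemma telescope_Ico (F : ℕ → ℝ) {A t : ℕ} (h : A ≤ t) :
    ∑ s ∈ Finset.Ico A t, (F (s+1) - F s) = F t - F A := by
  rw [Finset.sum_Ico_eq_sub _ h, Finset.sum_range_sub, Finset.sum_range_sub]; ring

set_option maxHeartbeats 1000000 in
/-- Recursion asymptotics, boundary case `c₁ = c₃ = c`: under the same recursion,
`aₜ/((log t)^{m+1} t^{c})` converges to a positive constant. -/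
theorem stmt_10 (c c₂ : ℝ) (hc : 0 < c) (hc₂ : 0 < c₂)
    (m : ℕ) (ε : ℝ) (hε : 0 < ε) (a b d : ℕ → ℝ)
    (ha1 : 0 < a 1) (hb : ∀ t : ℕ, 1 ≤ t → 0 < b t)
    (hrec : ∀ t : ℕ, 1 ≤ t → a (t + 1) = a t + c * d t * a t / t + c₂ * b t)
    (hd : Tendsto (fun t : ℕ => (t : ℝ) ^ ε * (d t - 1)) atTop (𝓝 0))
    (hbas : Tendsto (fun t : ℕ => b t / ((Real.log t) ^ m * (t : ℝ) ^ (c - 1)))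
      atTop (𝓝 1)) :
    ∃ C : ℝ, 0 < C ∧
      Tendsto (fun t : ℕ => a t / ((Real.log t) ^ (m + 1) * (t : ℝ) ^ c))
        atTop (𝓝 C) := by
  classical
  set ε' : ℝ := min ε 1 with hε'def
  have hε'pos : 0 < ε' := lt_min hε one_pos
  -- basic smallness of d
  have hdev : ∀ᶠ s : ℕ in atTop, |d s - 1| ≤ (s:ℝ)^(-ε') ∧ |d s - 1| ≤ 1/2 := by
    obtain ⟨N, hN⟩ := Metric.tendsto_atTop.mp hd (1/2) (by norm_num)
    filter_upwards [eventually_ge_atTop (max N 1)] with s hs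
    have hsN : N ≤ s := le_trans (le_max_left _ _) hs
    have hs1R : (1:ℝ) ≤ s := by exact_mod_cast le_trans (le_max_right _ _) hs
    have hspos : (0:ℝ) < s := by linarith
    have h3 := hN s hsN
    rw [Real.dist_eq, sub_zero, abs_mul] at h3
    have hpow : (0:ℝ) < (s:ℝ)^ε := Real.rpow_pos_of_pos hspos ε
    rw [abs_of_pos hpow] at h3
    have h4 : |d s - 1| ≤ (1/2) * (s:ℝ)^(-ε) := by
      calc |d s - 1| = (↑s^ε * |d s - 1|) / ↑s^ε := by field_simp
        _ ≤ (1/2) / ↑s^ε := by gcongr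

        _ = 1/2 * (s:ℝ)^(-ε) := by rw [Real.rpow_neg hspos.le, div_eq_mul_inv]
    have h5 : (s:ℝ)^(-ε) ≤ (s:ℝ)^(-ε') :=
      Real.rpow_le_rpow_of_exponent_le hs1R (neg_le_neg (min_le_left ε 1))
    have h6 : (s:ℝ)^(-ε) ≤ 1 :=
      Real.rpow_le_one_of_one_le_of_nonpos hs1R (by linarith)
    have h7 : (0:ℝ) ≤ (s:ℝ)^(-ε) := Real.rpow_nonneg hspos.le _
    constructor
    · linarith
    · linarith
  obtain ⟨N1, hN1⟩ := eventually_atTop.mp hdev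
  set T0 : ℕ := max (max N1 2) (⌈3*c⌉₊ + 2) with hT0def
  have hT02 : 2 ≤ T0 := le_trans (le_max_right N1 2) (le_max_left _ _)
  have hT0N1 : N1 ≤ T0 := le_trans (le_max_left N1 2) (le_max_left _ _)
  have hT0c : ∀ s : ℕ, T0 ≤ s → 3*c ≤ (s:ℝ) := by
    intro s hs
    have h1 : (⌈3*c⌉₊ : ℝ) ≤ s := by
      have : ⌈3*c⌉₊ ≤ s := le_trans (by omega) (le_trans (le_max_right _ _) hs)
      exact_mod_cast this
    exact le_trans (Nat.le_ceil _) h1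
  have hs2 : ∀ s : ℕ, T0 ≤ s → (2:ℝ) ≤ s := by
    intro s hs; exact_mod_cast le_trans hT02 hs
  have hspos : ∀ s : ℕ, T0 ≤ s → (0:ℝ) < s := fun s hs => lt_of_lt_of_le two_pos (hs2 s hs)
  have hd_half : ∀ s : ℕ, T0 ≤ s → |d s - 1| ≤ 1/2 :=
    fun s hs => (hN1 s (le_trans hT0N1 hs)).2
  have hd_eps : ∀ s : ℕ, T0 ≤ s → |d s - 1| ≤ (s:ℝ)^(-ε') :=
    fun s hs => (hN1 s (le_trans hT0N1 hs)).1
  have hdabs : ∀ s : ℕ, T0 ≤ s → |d s| ≤ 3/2 := by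
    intro s hs
    have h := abs_le.mp (hd_half s hs)
    rw [abs_le]; constructor <;> [linarith [h.1]; linarith [h.2]]
  have hx_half : ∀ s : ℕ, T0 ≤ s → |c * d s / s| ≤ 1/2 := by
    intro s hs
    have hs0 : (0:ℝ) < s := hspos s hs
    have h3c := hT0c s hs
    rw [abs_div, abs_mul, abs_of_pos hc, abs_of_pos hs0, div_le_iff₀ hs0]
    nlinarith [hdabs s hs, hc.le]
  have hp_half : ∀ s : ℕ, T0 ≤ s → (1:ℝ)/2 ≤ 1 + c * d s / s := by
    intro s hs
    have := hx_half s hs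
    have := abs_le.mp this
    linarith [this.1]
  set P : ℕ → ℝ := fun t => ∏ s ∈ Finset.Ico T0 t, (1 + c * d s / s) with hPdef
  have hPpos : ∀ t, 0 < P t := by
    intro t
    apply Finset.prod_pos
    intro s hs
    have := hp_half s (Finset.mem_Ico.mp hs).1
    linarith
  have hPsucc : ∀ t, T0 ≤ t → P (t+1) = P t * (1 + c * d t / t) := by
    intro t ht
    exact Finset.prod_Ico_succ_top ht _
  have hform : ∀ t, T0 ≤ t →
      a t = P t * (a T0 + c₂ * ∑ s ∈ Finset.Ico T0 t, b s / P (s+1)) := by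
    intro t ht
    induction t, ht using Nat.le_induction with
    | base => simp [hPdef, Finset.Ico_self]
    | succ t ht IH =>
      have ht1 : 1 ≤ t := le_trans (by omega) ht
      have hrec' := hrec t ht1
      have hPs := hPsucc t ht
      have hPt := hPpos t
      have hp := hp_half t ht
      have hpne : (1 + c * d t / t) ≠ 0 := by intro h; rw [h] at hp; linarith
      have ht0 : (t:ℝ) ≠ 0 := ne_of_gt (hspos t ht)
      have hne2 : (↑t:ℝ) + c * d t ≠ 0 := by
        have heq : (↑t:ℝ) + c * d t = ↑t * (1 + c * d t / ↑t) := by field_simp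
        rw [heq]; exact mul_ne_zero ht0 hpne
      rw [Finset.sum_Ico_succ_top ht, hrec', IH, hPs]
      field_simp
      ring
  -- log expansion
  set e : ℕ → ℝ := fun s => if T0 ≤ s then
      Real.log (1 + c * d s / s) - c * (Real.log (↑s+1) - Real.log ↑s) else 0 with hedef
  have hebound : ∀ s : ℕ, |e s| ≤ (5*c^2+2*c) * ((1:ℝ)/s^2) + c * (s:ℝ)^(-(1+ε')) := by
    intro s
    rcases le_or_gt T0 s with hs | hs
    · have hs2' := hs2 s hs
      have hs0 : (0:ℝ) < s := hspos s hs
      have hx := hx_half s hs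
      have he : e s = (Real.log (1 + c * d s / s) - c * d s / s)
          + c * ((d s - 1) / s) + c * (1/s - Real.log (1 + 1/(s:ℝ))) := by
        rw [hedef]; simp only [if_pos hs]
        rw [show Real.log (↑s+1) - Real.log ↑s = Real.log (1 + 1/(s:ℝ)) by
          rw [show (1:ℝ) + 1/s = (↑s+1)/s by field_simp,
            Real.log_div (by positivity) (ne_of_gt hs0)]]
        field_simp
        ring
      have hA : |Real.log (1 + c * d s / s) - c * d s / s| ≤ 2 * (c * d s / s)^2 :=
        log_one_add_sub_le hx
      have hA2 : 2 * (c * d s / s)^2 ≤ 5 * c^2 * (1/s^2) := by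
        have h9 : (d s)^2 ≤ 9/4 := by nlinarith [abs_le.mp (hdabs s hs)]
        have heq : 2 * (c * d s / s)^2 = (2 * (d s)^2) * (c^2 * (1/s^2)) := by
          field_simp
        rw [heq, show 5 * c^2 * (1/s^2) = 5 * (c^2 * (1/s^2)) by ring]
        apply mul_le_mul_of_nonneg_right (by linarith) (by positivity)
      have hB : |(d s - 1) / s| ≤ (s:ℝ)^(-(1+ε')) := by
        have key : (s:ℝ)^(-(1+ε')) = (s:ℝ)^(-ε') * (↑s)⁻¹ := by
          rw [show -(1+ε') = -ε' + (-1) by ring, Real.rpow_add hs0, Real.rpow_neg_one]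
        rw [key, abs_div, abs_of_pos hs0, div_eq_mul_inv]
        exact mul_le_mul_of_nonneg_right (hd_eps s hs) (by positivity)
      have hZ : |1/(s:ℝ) - Real.log (1 + 1/(s:ℝ))| ≤ 2 * (1/s^2) := by
        have h12 : |1/(s:ℝ)| ≤ 1/2 := by
          rw [abs_of_pos (by positivity)]
          rw [div_le_div_iff₀ hs0 two_pos]; linarith
        have h := log_one_add_sub_le h12
        rw [abs_sub_comm] at h
        calc |1/(s:ℝ) - Real.log (1 + 1/(s:ℝ))| ≤ 2 * (1/(s:ℝ))^2 := h
          _ = 2 * (1/s^2) := by rw [div_pow, one_pow]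
      rw [he]
      calc |(Real.log (1 + c * d s / s) - c * d s / s) + c * ((d s - 1) / s)
            + c * (1/s - Real.log (1 + 1/(s:ℝ)))|
          ≤ |Real.log (1 + c * d s / s) - c * d s / s| + |c * ((d s - 1) / s)|
            + |c * (1/s - Real.log (1 + 1/(s:ℝ)))| := abs_add_three _ _ _
        _ ≤ 5 * c^2 * (1/s^2) + c * (s:ℝ)^(-(1+ε')) + c * (2 * (1/s^2)) := by
            apply add_le_add (add_le_add (le_trans hA hA2) ?_) ?_
            · rw [abs_mul, abs_of_pos hc]
              exact mul_le_mul_of_nonneg_left hB hc.le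
            · rw [abs_mul, abs_of_pos hc]
              exact mul_le_mul_of_nonneg_left hZ hc.le
        _ = (5*c^2+2*c) * ((1:ℝ)/s^2) + c * (s:ℝ)^(-(1+ε')) := by ring
    · rw [hedef]
      simp only [if_neg (by omega : ¬ T0 ≤ s), abs_zero]
      apply add_nonneg
      · positivity
      · exact mul_nonneg hc.le (Real.rpow_nonneg (Nat.cast_nonneg s) _)
  have hesum : Summable e := by
    have hmaj : Summable (fun s : ℕ => (5*c^2+2*c) * ((1:ℝ)/s^2) + c * (s:ℝ)^(-(1+ε'))) := by
      apply Summable.add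
      · exact (Real.summable_one_div_nat_pow.mpr one_lt_two).mul_left _
      · apply Summable.mul_left
        have h := Real.summable_one_div_nat_rpow.mpr (by linarith : (1:ℝ) < 1+ε')
        apply h.congr
        intro n
        rw [Real.rpow_neg (Nat.cast_nonneg n), one_div]
    exact (Summable.of_nonneg_of_le (fun s => abs_nonneg _) hebound hmaj).of_abs
  have hEten : Tendsto (fun t => ∑ s ∈ Finset.Ico T0 t, e s) atTop (𝓝 (∑' s, e s)) := by
    apply hesum.hasSum.tendsto_sum_nat.congr'
    filter_upwards [eventually_ge_atTop T0] with t ht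
    rw [Finset.sum_Ico_eq_sub _ ht]
    rw [show ∑ s ∈ Finset.range T0, e s = 0 from Finset.sum_eq_zero fun i hi => by
      rw [hedef]; exact if_neg (by have := Finset.mem_range.mp hi; omega), sub_zero]
  have hlogP : ∀ t, T0 ≤ t → Real.log (P t) - c * Real.log t
      = (∑ s ∈ Finset.Ico T0 t, e s) - c * Real.log T0 := by
    intro t ht
    have h1 : Real.log (P t) = ∑ s ∈ Finset.Ico T0 t, Real.log (1 + c * d s / s) := by
      rw [hPdef]
      apply Real.log_prod
      intro s hs
      have := hp_half s (Finset.mem_Ico.mp hs).1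
      intro h; rw [h] at this; linarith
    have h2 : ∀ s ∈ Finset.Ico T0 t, Real.log (1 + c * d s / s)
        = e s + c * (Real.log (↑s+1) - Real.log ↑s) := by
      intro s hs
      rw [hedef]; simp only [if_pos (Finset.mem_Ico.mp hs).1]; ring
    have h3 : ∑ s ∈ Finset.Ico T0 t, (Real.log (↑s+1) - Real.log ↑s)
        = Real.log ↑t - Real.log ↑T0 := by
      rw [← telescope_Ico (fun s => Real.log (s:ℝ)) ht]
      apply Finset.sum_congr rfl
      intro s _
      push_cast
      ring
    rw [h1, Finset.sum_congr rfl h2, Finset.sum_add_distrib, ← Finset.mul_sum, h3]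
    ring
  set K : ℝ := Real.exp ((∑' s, e s) - c * Real.log T0) with hKdef
  have hK : 0 < K := Real.exp_pos _
  have hPK : Tendsto (fun t : ℕ => P t / (t:ℝ)^c) atTop (𝓝 K) := by
    have h2 : Tendsto (fun t : ℕ => Real.log (P t) - c * Real.log t) atTop
        (𝓝 ((∑' s, e s) - c * Real.log T0)) := by
      apply (hEten.sub_const _).congr'
      filter_upwards [eventually_ge_atTop T0] with t ht
      exact (hlogP t ht).symm
    have h3 := (Real.continuous_exp.tendsto _).comp h2
    rw [hKdef]
    apply h3.congr'
    filter_upwards [eventually_ge_atTop T0] with t ht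
    have ht0 : (0:ℝ) < t := hspos t ht
    simp only [Function.comp]
    rw [Real.exp_sub, Real.exp_log (hPpos t), Real.rpow_def_of_pos ht0,
      mul_comm (Real.log ↑t) c]
  have hshift : Tendsto (fun s : ℕ => P (s+1) / ((s:ℝ)+1)^c) atTop (𝓝 K) := by
    apply (hPK.comp (tendsto_add_atTop_nat 1)).congr
    intro s
    simp only [Function.comp]
    push_cast
    rfl
  -- f * s / log^m → K⁻¹
  have hfs : Tendsto (fun s : ℕ => (b s / P (s+1)) * s / Real.log s ^ m) atTop (𝓝 K⁻¹) := by
    have hratio : Tendsto (fun s : ℕ => (s:ℝ)/(↑s+1)) atTop (𝓝 1) :=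
      tendsto_natCast_div_add_atTop (1:ℝ)
    have hc1 : Tendsto (fun s : ℕ => ((s:ℝ)/(↑s+1))^c) atTop (𝓝 1) := by
      have hcont : ContinuousAt (fun x:ℝ => x^c) 1 :=
        Real.continuousAt_rpow_const 1 c (Or.inl one_ne_zero)
      have h := hcont.tendsto.comp hratio
      rwa [Real.one_rpow] at h
    have hinv : Tendsto (fun s : ℕ => ((s:ℝ)+1)^c / P (s+1)) atTop (𝓝 K⁻¹) := by
      apply (hshift.inv₀ (ne_of_gt hK)).congr
      intro s
      rw [inv_div]
    have hsc : Tendsto (fun s : ℕ => (s:ℝ)^c / P (s+1)) atTop (𝓝 K⁻¹) := by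
      have h := hc1.mul hinv
      rw [one_mul] at h
      apply h.congr'
      filter_upwards [eventually_ge_atTop 1] with s hs
      have hs0 : (0:ℝ) < s := by exact_mod_cast hs
      have hP1 := hPpos (s+1)
      have hs1c : (0:ℝ) < ((s:ℝ)+1)^c := Real.rpow_pos_of_pos (by linarith) c
      rw [Real.div_rpow hs0.le (by positivity)]
      field_simp
    have hmain := hbas.mul hsc
    rw [one_mul] at hmain
    apply hmain.congr'
    filter_upwards [eventually_ge_atTop 2] with s hs
    have hs2R : (2:ℝ) ≤ s := by exact_mod_cast hs
    have hs0 : (0:ℝ) < s := by linarith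
    have hlogpos : 0 < Real.log s := Real.log_pos (by linarith)
    have hP1 := hPpos (s+1)
    have hscpos : (0:ℝ) < (s:ℝ)^c := Real.rpow_pos_of_pos hs0 c
    have hsc1 : (s:ℝ)^c = (s:ℝ)^(c-1) * s := by
      conv_lhs => rw [show c = (c-1)+1 by ring]
      rw [Real.rpow_add_one (ne_of_gt hs0)]
    have hsc1pos : (0:ℝ) < (s:ℝ)^(c-1) := Real.rpow_pos_of_pos hs0 _
    rw [hsc1]
    field_simp
  set g : ℕ → ℝ := fun s => Real.log (↑s+1) ^ (m+1) - Real.log ↑s ^ (m+1) with hgdef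
  have hgpos : ∀ s, T0 ≤ s → 0 < g s := by
    intro s hs
    have h2 : (2:ℝ) ≤ s := hs2 s hs
    have h1 : 0 < Real.log ↑s := Real.log_pos (by linarith)
    have h3 : Real.log ↑s < Real.log (↑s+1) := Real.log_lt_log (by linarith) (by linarith)
    have h4 := pow_lt_pow_left₀ h3 h1.le (Nat.succ_ne_zero m)
    rw [hgdef]
    exact sub_pos.mpr h4
  have hsg : Tendsto (fun s : ℕ => (s:ℝ) * g s / Real.log ↑s ^ m) atTop (𝓝 (↑m+1)) := by
    have := aux_gm m
    simpa [hgdef] using this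
  have hfg : Tendsto (fun s : ℕ => (b s / P (s+1)) / g s) atTop (𝓝 (K⁻¹ * ((m:ℝ)+1)⁻¹)) := by
    have hm0 : ((m:ℝ)+1) ≠ 0 := by positivity
    have h1 := hfs.mul (hsg.inv₀ hm0)
    apply h1.congr'
    filter_upwards [eventually_ge_atTop T0] with s hs
    have hs0 : (0:ℝ) < s := hspos s hs
    have hlogpos : 0 < Real.log ↑s := Real.log_pos (by linarith [hs2 s hs])
    have hg0 := hgpos s hs
    have hP1 := hPpos (s+1)
    field_simp
  have hlogtop : Tendsto (fun t : ℕ => Real.log ↑t) atTop atTop :=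
    Real.tendsto_log_atTop.comp tendsto_natCast_atTop_atTop
  have hlogpowtop : Tendsto (fun t : ℕ => Real.log ↑t ^ (m+1)) atTop atTop :=
    (tendsto_pow_atTop (Nat.succ_ne_zero m)).comp hlogtop
  have hGtele : ∀ t, T0 ≤ t → ∑ s ∈ Finset.Ico T0 t, g s
      = Real.log ↑t ^ (m+1) - Real.log ↑T0 ^ (m+1) := by
    intro t ht
    rw [← telescope_Ico (fun s => Real.log (s:ℝ) ^ (m+1)) ht]
    apply Finset.sum_congr rfl
    intro s _
    rw [hgdef]
    push_cast
    ring
  have hGtop : Tendsto (fun t => ∑ s ∈ Finset.Ico T0 t, g s) atTop atTop := by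
    apply (tendsto_atTop_add_const_right atTop (-(Real.log ↑T0 ^ (m+1))) hlogpowtop).congr'
    filter_upwards [eventually_ge_atTop T0] with t ht
    rw [hGtele t ht]
    ring
  have hSG := cesaro_weighted T0 (fun s => b s / P (s+1)) g (K⁻¹ * ((m:ℝ)+1)⁻¹)
    hgpos hGtop hfg
  have hGlog : Tendsto (fun t => (∑ s ∈ Finset.Ico T0 t, g s) / Real.log ↑t ^ (m+1))
      atTop (𝓝 1) := by
    have hC0 : Tendsto (fun t : ℕ => Real.log ↑T0 ^ (m+1) * (Real.log ↑t ^ (m+1))⁻¹)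
        atTop (𝓝 0) := by
      have h2 := hlogpowtop.inv_tendsto_atTop.const_mul (Real.log ↑T0 ^ (m+1))
      simpa using h2
    have h := ((tendsto_const_nhds : Tendsto (fun _ : ℕ => (1:ℝ)) atTop (𝓝 1))).sub hC0
    rw [sub_zero] at h
    apply h.congr'
    filter_upwards [eventually_ge_atTop T0] with t ht
    have hlt : 0 < Real.log ↑t := Real.log_pos (by linarith [hs2 t ht])
    have hltp : (0:ℝ) < Real.log ↑t ^ (m+1) := by positivity
    rw [hGtele t ht]
    field_simp
  -- final assembly
  refine ⟨K * (a T0 * 0 + c₂ * (K⁻¹ * ((m:ℝ)+1)⁻¹ * 1)), by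
    rw [mul_zero, zero_add, mul_one]; positivity, ?_⟩
  have hloginv : Tendsto (fun t : ℕ => (Real.log ↑t ^ (m+1))⁻¹) atTop (𝓝 0) :=
    hlogpowtop.inv_tendsto_atTop
  have hmain : Tendsto (fun t : ℕ => (P t/(t:ℝ)^c) * (a T0 * (Real.log ↑t ^ (m+1))⁻¹
      + c₂ * ((∑ s ∈ Finset.Ico T0 t, b s / P (s+1)) / (∑ s ∈ Finset.Ico T0 t, g s)
        * ((∑ s ∈ Finset.Ico T0 t, g s) / Real.log ↑t ^ (m+1)))))
      atTop (𝓝 (K * (a T0 * 0 + c₂ * (K⁻¹ * ((m:ℝ)+1)⁻¹ * 1)))) :=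
    hPK.mul ((tendsto_const_nhds.mul hloginv).add
      (tendsto_const_nhds.mul (hSG.mul hGlog)))
  apply hmain.congr'
  filter_upwards [eventually_ge_atTop (T0+1)] with t ht
  have htT0 : T0 ≤ t := by omega
  have ht0 : (0:ℝ) < t := hspos t htT0
  have hlt : 0 < Real.log ↑t := Real.log_pos (by linarith [hs2 t htT0])
  have hGt : 0 < ∑ s ∈ Finset.Ico T0 t, g s := by
    apply Finset.sum_pos (fun s hs => hgpos s (Finset.mem_Ico.mp hs).1)
    exact Finset.nonempty_Ico.mpr (by omega)
  have hPt := hPpos t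
  have htc : (0:ℝ) < (t:ℝ)^c := Real.rpow_pos_of_pos ht0 c
  rw [hform t htT0]
  field_simp
end

section
/- Let p_r, p_b : ℕ → ℝ be nonnegative summable functions (indexed by k ≥ 1), and let h_r, h_b : ℕ → ℝ be nonnegative nondecreasing functions such that h_r(k) ≤ h_b(k) for every k, the series Σₖ h_r(k)p_r(k) and Σₖ h_b(k)p_b(k) converge, and p_r(i)·p_b(j) ≤ p_r(j)·p_b(i) for all i ≥ j ≥ 1 (likelihood-ratio ordering). Then (Σ_{k≥1} h_r(k)p_r(k)) · (Σ_{k≥1} p_b(k)) ≤ (Σ_{k≥1} p_r(k)) · (Σ_{k≥1} h_b(k)p_b(k)). In particular, if the denominators are positive, the ratio of expected gains Σh_r p_r / Σh_b p_b is at most the ratio of masses Σp_r / Σp_b. -/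
/-- Finite Chebyshev-type inequality under likelihood-ratio ordering. -/
lemma chebLR_fin (h P Q : ℕ → ℝ) (hP : ∀ i, 0 ≤ P i) (hQ : ∀ i, 0 ≤ Q i)
    (hmono : ∀ j k : ℕ, j ≤ k → h j ≤ h k)
    (hLR : ∀ i j : ℕ, j ≤ i → P i * Q j ≤ P j * Q i) (s : Finset ℕ) :
    (∑ i ∈ s, h i * P i) * (∑ j ∈ s, Q j) ≤
      (∑ i ∈ s, P i) * (∑ j ∈ s, h j * Q j) := by
  have key : ∀ i j : ℕ, h i * P i * Q j + h j * P j * Q i ≤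
      P i * (h j * Q j) + P j * (h i * Q i) := by
    intro i j
    rcases le_total j i with hij | hij
    · have h1 := hLR i j hij
      have h2 := hmono j i hij
      nlinarith [hP i, hP j, hQ i, hQ j]
    · have h1 := hLR j i hij
      have h2 := hmono i j hij
      nlinarith [hP i, hP j, hQ i, hQ j]
  have hsum : ∑ i ∈ s, ∑ j ∈ s, (h i * P i * Q j + h j * P j * Q i) ≤
      ∑ i ∈ s, ∑ j ∈ s, (P i * (h j * Q j) + P j * (h i * Q i)) := by
    refine Finset.sum_le_sum fun i _ => Finset.sum_le_sum fun j _ => key i j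
  have e1 : ∑ i ∈ s, ∑ j ∈ s, h i * P i * Q j =
      (∑ i ∈ s, h i * P i) * (∑ j ∈ s, Q j) := by
    rw [Finset.sum_mul_sum]
  have e2 : ∑ i ∈ s, ∑ j ∈ s, h j * P j * Q i =
      (∑ i ∈ s, h i * P i) * (∑ j ∈ s, Q j) := by
    rw [Finset.sum_comm, Finset.sum_mul_sum]
  have e3 : ∑ i ∈ s, ∑ j ∈ s, P i * (h j * Q j) =
      (∑ i ∈ s, P i) * (∑ j ∈ s, h j * Q j) := by
    rw [Finset.sum_mul_sum]
  have e4 : ∑ i ∈ s, ∑ j ∈ s, P j * (h i * Q i) =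
      (∑ i ∈ s, P i) * (∑ j ∈ s, h j * Q j) := by
    rw [Finset.sum_comm, Finset.sum_mul_sum]
  simp only [Finset.sum_add_distrib] at hsum
  rw [e1, e2, e3, e4] at hsum
  linarith

/-- Likelihood-ratio ordering implies the ratio of expected gains is at most the
ratio of masses: if `p_r, p_b ≥ 0` are summable on `k ≥ 1`, `h_r, h_b ≥ 0` are
nondecreasing with `h_r ≤ h_b`, the gain series converge, and
`p_r(i)p_b(j) ≤ p_r(j)p_b(i)` for `i ≥ j ≥ 1`, then
`(Σ h_r p_r)(Σ p_b) ≤ (Σ p_r)(Σ h_b p_b)`. -/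
theorem stmt_13 (pr pb hr hb : ℕ → ℝ)
    (hpr : ∀ k : ℕ, 1 ≤ k → 0 ≤ pr k) (hpb : ∀ k : ℕ, 1 ≤ k → 0 ≤ pb k)
    (hhr : ∀ k : ℕ, 1 ≤ k → 0 ≤ hr k) (hhb : ∀ k : ℕ, 1 ≤ k → 0 ≤ hb k)
    (hhrmono : ∀ j k : ℕ, 1 ≤ j → j ≤ k → hr j ≤ hr k)
    (hhbmono : ∀ j k : ℕ, 1 ≤ j → j ≤ k → hb j ≤ hb k)
    (hrb : ∀ k : ℕ, 1 ≤ k → hr k ≤ hb k)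
    (hSpr : Summable (fun k : ℕ => pr (k + 1)))
    (hSpb : Summable (fun k : ℕ => pb (k + 1)))
    (hShr : Summable (fun k : ℕ => hr (k + 1) * pr (k + 1)))
    (hShb : Summable (fun k : ℕ => hb (k + 1) * pb (k + 1)))
    (hLR : ∀ i j : ℕ, 1 ≤ j → j ≤ i → pr i * pb j ≤ pr j * pb i) :
    (∑' k : ℕ, hr (k + 1) * pr (k + 1)) * (∑' k : ℕ, pb (k + 1)) ≤
      (∑' k : ℕ, pr (k + 1)) * (∑' k : ℕ, hb (k + 1) * pb (k + 1)) := by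
  -- summability of hr * pb by comparison with hb * pb
  have hSrpb : Summable (fun k : ℕ => hr (k + 1) * pb (k + 1)) := by
    refine Summable.of_nonneg_of_le
      (fun k => mul_nonneg (hhr _ (Nat.succ_le_succ (Nat.zero_le _)))
        (hpb _ (Nat.succ_le_succ (Nat.zero_le _))))
      (fun k => mul_le_mul_of_nonneg_right (hrb _ (Nat.succ_le_succ (Nat.zero_le _)))
        (hpb _ (Nat.succ_le_succ (Nat.zero_le _)))) hShb
  -- step 1: (Σ hr pr)(Σ pb) ≤ (Σ pr)(Σ hr pb) by taking limits of partial sums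
  have step1 : (∑' k : ℕ, hr (k + 1) * pr (k + 1)) * (∑' k : ℕ, pb (k + 1)) ≤
      (∑' k : ℕ, pr (k + 1)) * (∑' k : ℕ, hr (k + 1) * pb (k + 1)) := by
    have t1 := (hShr.hasSum.tendsto_sum_nat).mul (hSpb.hasSum.tendsto_sum_nat)
    have t2 := (hSpr.hasSum.tendsto_sum_nat).mul (hSrpb.hasSum.tendsto_sum_nat)
    refine le_of_tendsto_of_tendsto' t1 t2 fun n => ?_
    exact chebLR_fin (fun k => hr (k + 1)) (fun k => pr (k + 1)) (fun k => pb (k + 1))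
      (fun i => hpr _ (Nat.succ_le_succ (Nat.zero_le _)))
      (fun i => hpb _ (Nat.succ_le_succ (Nat.zero_le _)))
      (fun j k hjk => hhrmono _ _ (Nat.succ_le_succ (Nat.zero_le _)) (Nat.succ_le_succ hjk))
      (fun i j hji => hLR _ _ (Nat.succ_le_succ (Nat.zero_le _)) (Nat.succ_le_succ hji))
      (Finset.range n)
  -- step 2: Σ hr pb ≤ Σ hb pb
  have step2 : (∑' k : ℕ, hr (k + 1) * pb (k + 1)) ≤ (∑' k : ℕ, hb (k + 1) * pb (k + 1)) := by
    refine Summable.tsum_le_tsum (fun k => mul_le_mul_of_nonneg_right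
      (hrb _ (Nat.succ_le_succ (Nat.zero_le _)))
      (hpb _ (Nat.succ_le_succ (Nat.zero_le _)))) hSrpb hShb
  have hprnn : 0 ≤ ∑' k : ℕ, pr (k + 1) :=
    tsum_nonneg fun k => hpr _ (Nat.succ_le_succ (Nat.zero_le _))
  calc (∑' k : ℕ, hr (k + 1) * pr (k + 1)) * (∑' k : ℕ, pb (k + 1))
      ≤ (∑' k : ℕ, pr (k + 1)) * (∑' k : ℕ, hr (k + 1) * pb (k + 1)) := step1
    _ ≤ (∑' k : ℕ, pr (k + 1)) * (∑' k : ℕ, hb (k + 1) * pb (k + 1)) :=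
        mul_le_mul_of_nonneg_left step2 hprnn
end
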